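/- arXiv:1412.6769 — 8 statements merged into one kernel-verified Lean document; each statement's English description precedes it below -/
import Mathlib

section
/- Let S be a finite set, let P and Q be probability distributions on S, let G : S → [0,∞) be a function, and let α > 1. Assume ∑_{i∈S} G_i P_i > 0 and ∑_{i∈S} G_i Q_i > 0. Then (1/(α−1))·ln(∑_{i∈S} G_i^{α−1} P_i) ≤ (1/α)·ln(∑_{i∈S} G_i^{α} Q_i) + D_α(P‖Q). -/
open scoped BigOperators

/-- Extended-real logarithm, with `ln 0 = -∞`. -/
noncomputable def elog (x : ℝ) : EReal := if x = 0 then ⊥ else ((Real.log x : ℝ) : EReal)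

open Classical in
/-- Rényi divergence of order `α` between probability distributions on a finite set,
with the `1/(α(α-1))` normalization; `+∞` if the support condition fails. -/
noncomputable def renyiDiv {S : Type*} [Fintype S] (α : ℝ) (P Q : S → ℝ) : EReal :=
  if ∀ i, Q i = 0 → P i = 0 then
    (((1 / (α * (α - 1))) * Real.log (∑ i, P i ^ α * Q i ^ (1 - α)) : ℝ) : EReal)
  else ⊤

theorem lpcb_functional_finite {S : Type*} [Fintype S] (P Q G : S → ℝ) (α : ℝ)
    (hα : 1 < α)
    (hPnonneg : ∀ i, 0 ≤ P i) (hPsum : ∑ i, P i = 1)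
    (hQnonneg : ∀ i, 0 ≤ Q i) (hQsum : ∑ i, Q i = 1)
    (hGnonneg : ∀ i, 0 ≤ G i)
    (hGP : 0 < ∑ i, G i * P i) (hGQ : 0 < ∑ i, G i * Q i) :
    ((1 / (α - 1) : ℝ) : EReal) * elog (∑ i, G i ^ (α - 1) * P i)
      ≤ ((1 / α : ℝ) : EReal) * elog (∑ i, G i ^ α * Q i) + renyiDiv α P Q := by
  have hα0 : 0 < α := lt_trans one_pos hα
  have hα1 : 0 < α - 1 := sub_pos.2 hα
  -- A > 0
  have hA : 0 < ∑ i, G i ^ (α - 1) * P i := by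
    have hex : ∃ i ∈ Finset.univ, (0:ℝ) < G i * P i :=
      Finset.exists_lt_of_sum_lt (by simpa using hGP)
    obtain ⟨i, -, hi⟩ := hex
    have hGi : 0 < G i := by
      rcases lt_or_eq_of_le (hGnonneg i) with h | h
      · exact h
      · rw [← h, zero_mul] at hi; exact absurd hi (lt_irrefl 0)
    have hPi : 0 < P i := by
      rcases lt_or_eq_of_le (hPnonneg i) with h | h
      · exact h
      · rw [← h, mul_zero] at hi; exact absurd hi (lt_irrefl 0)
    refine lt_of_lt_of_le (show (0:ℝ) < G i ^ (α - 1) * P i from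
      mul_pos (Real.rpow_pos_of_pos hGi _) hPi) ?_
    exact Finset.single_le_sum (fun j _ =>
      mul_nonneg (Real.rpow_nonneg (hGnonneg j) _) (hPnonneg j)) (Finset.mem_univ i)
  have hB : 0 < ∑ i, G i ^ α * Q i := by
    have hex : ∃ i ∈ Finset.univ, (0:ℝ) < G i * Q i :=
      Finset.exists_lt_of_sum_lt (by simpa using hGQ)
    obtain ⟨i, -, hi⟩ := hex
    have hGi : 0 < G i := by
      rcases lt_or_eq_of_le (hGnonneg i) with h | h
      · exact h
      · rw [← h, zero_mul] at hi; exact absurd hi (lt_irrefl 0)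
    have hQi : 0 < Q i := by
      rcases lt_or_eq_of_le (hQnonneg i) with h | h
      · exact h
      · rw [← h, mul_zero] at hi; exact absurd hi (lt_irrefl 0)
    refine lt_of_lt_of_le (show (0:ℝ) < G i ^ α * Q i from
      mul_pos (Real.rpow_pos_of_pos hGi _) hQi) ?_
    exact Finset.single_le_sum (fun j _ =>
      mul_nonneg (Real.rpow_nonneg (hGnonneg j) _) (hQnonneg j)) (Finset.mem_univ i)
  rw [elog, if_neg hA.ne', elog, if_neg hB.ne', renyiDiv]
  by_cases hsupp : ∀ i, Q i = 0 → P i = 0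
  · rw [if_pos hsupp]
    -- C > 0
    have hC : 0 < ∑ i, P i ^ α * Q i ^ (1 - α) := by
      have : ∃ i, 0 < P i := by
        by_contra h
        push_neg at h
        have : ∑ i, P i = 0 := Finset.sum_eq_zero fun i _ => le_antisymm (h i) (hPnonneg i)
        rw [hPsum] at this; norm_num at this
      obtain ⟨i, hPi⟩ := this
      have hQi : 0 < Q i := by
        rcases lt_or_eq_of_le (hQnonneg i) with h | h
        · exact h
        · exact absurd (hsupp i h.symm) hPi.ne'
      refine lt_of_lt_of_le (show (0:ℝ) < P i ^ α * Q i ^ (1 - α) from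
        mul_pos (Real.rpow_pos_of_pos hPi _) (Real.rpow_pos_of_pos hQi _)) ?_
      exact Finset.single_le_sum (fun j _ =>
        mul_nonneg (Real.rpow_nonneg (hPnonneg j) _) (Real.rpow_nonneg (hQnonneg j) _))
        (Finset.mem_univ i)
    -- Hölder
    have hpq : Real.HolderConjugate (α / (α - 1)) α := by
      constructor
      · rw [inv_div, inv_one, ← one_div, ← add_div, sub_add_cancel, div_self hα0.ne']
      · positivity
      · positivity
    set f : S → ℝ := fun i => G i ^ (α - 1) * Q i ^ ((α - 1) / α) with hf
    set g : S → ℝ := fun i => P i * Q i ^ ((1 - α) / α) with hg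
    have hfnn : ∀ i ∈ Finset.univ, (0:ℝ) ≤ f i := fun i _ =>
      mul_nonneg (Real.rpow_nonneg (hGnonneg i) _) (Real.rpow_nonneg (hQnonneg i) _)
    have hgnn : ∀ i ∈ Finset.univ, (0:ℝ) ≤ g i := fun i _ =>
      mul_nonneg (hPnonneg i) (Real.rpow_nonneg (hQnonneg i) _)
    have holder := Real.inner_le_Lp_mul_Lq_of_nonneg (s := Finset.univ) hpq hfnn hgnn
    have hfg : ∑ i, f i * g i = ∑ i, G i ^ (α - 1) * P i := by
      refine Finset.sum_congr rfl fun i _ => ?_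
      rcases lt_or_eq_of_le (hQnonneg i) with h | h
      · rw [hf, hg]
        have : Q i ^ ((α - 1) / α) * Q i ^ ((1 - α) / α) = 1 := by
          rw [← Real.rpow_add h, show (α - 1) / α + (1 - α) / α = 0 by ring, Real.rpow_zero]
        calc G i ^ (α - 1) * Q i ^ ((α - 1) / α) * (P i * Q i ^ ((1 - α) / α))
            = G i ^ (α - 1) * P i * (Q i ^ ((α - 1) / α) * Q i ^ ((1 - α) / α)) := by ring
          _ = G i ^ (α - 1) * P i := by rw [this, mul_one]
      · have hPi : P i = 0 := hsupp i h.symm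
        simp [hf, hg, hPi]
    have hfp : ∑ i, f i ^ (α / (α - 1)) = ∑ i, G i ^ α * Q i := by
      refine Finset.sum_congr rfl fun i _ => ?_
      rw [hf, Real.mul_rpow (Real.rpow_nonneg (hGnonneg i) _) (Real.rpow_nonneg (hQnonneg i) _),
        ← Real.rpow_mul (hGnonneg i), ← Real.rpow_mul (hQnonneg i)]
      congr 1
      · congr 1; field_simp
      · rw [show (α - 1) / α * (α / (α - 1)) = 1 by field_simp, Real.rpow_one]
    have hgq : ∑ i, g i ^ α = ∑ i, P i ^ α * Q i ^ (1 - α) := by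
      refine Finset.sum_congr rfl fun i _ => ?_
      rw [hg, Real.mul_rpow (hPnonneg i) (Real.rpow_nonneg (hQnonneg i) _),
        ← Real.rpow_mul (hQnonneg i)]
      congr 2
      field_simp
    rw [hfg, hfp, hgq] at holder
    -- logs
    have hlog : Real.log (∑ i, G i ^ (α - 1) * P i)
        ≤ (α - 1) / α * Real.log (∑ i, G i ^ α * Q i)
          + 1 / α * Real.log (∑ i, P i ^ α * Q i ^ (1 - α)) := by
      calc Real.log (∑ i, G i ^ (α - 1) * P i)
          ≤ Real.log ((∑ i, G i ^ α * Q i) ^ (1 / (α / (α - 1)))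
              * (∑ i, P i ^ α * Q i ^ (1 - α)) ^ (1 / α)) := Real.log_le_log hA holder
        _ = (α - 1) / α * Real.log (∑ i, G i ^ α * Q i)
              + 1 / α * Real.log (∑ i, P i ^ α * Q i ^ (1 - α)) := by
            rw [Real.log_mul (by positivity) (by positivity),
              Real.log_rpow hB, Real.log_rpow hC, one_div_div]
    have h1 : 1 / (α - 1) * ((α - 1) / α) = 1 / α := by field_simp
    have h2 : 1 / (α - 1) * (1 / α) = 1 / (α * (α - 1)) := by field_simp
    have hfinal : 1 / (α - 1) * Real.log (∑ i, G i ^ (α - 1) * P i)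
        ≤ 1 / α * Real.log (∑ i, G i ^ α * Q i)
          + 1 / (α * (α - 1)) * Real.log (∑ i, P i ^ α * Q i ^ (1 - α)) := calc
      1 / (α - 1) * Real.log (∑ i, G i ^ (α - 1) * P i)
        ≤ 1 / (α - 1) * ((α - 1) / α * Real.log (∑ i, G i ^ α * Q i)
            + 1 / α * Real.log (∑ i, P i ^ α * Q i ^ (1 - α))) :=
          mul_le_mul_of_nonneg_left hlog (by positivity)
      _ = 1 / α * Real.log (∑ i, G i ^ α * Q i)
            + 1 / (α * (α - 1)) * Real.log (∑ i, P i ^ α * Q i ^ (1 - α)) := by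
          rw [mul_add, ← mul_assoc, ← mul_assoc, h1, h2]
    exact_mod_cast hfinal
  · rw [if_neg hsupp, ← EReal.coe_mul, ← EReal.coe_mul,
      EReal.add_top_of_ne_bot (EReal.coe_ne_bot _)]
    exact le_top
end

section
/- Let S be a finite set, let P and Q be probability distributions on S, let A ⊆ S be an event, and let α > 1. Then (1/α)·ln P(A) ≥ (1/(α−1))·ln Q(A) − D_α(Q‖P), where P(A) = ∑_{i∈A} P_i and Q(A) = ∑_{i∈A} Q_i (with ln 0 = −∞). -/
open scoped BigOperators

/-- The lower-bound form of the logarithmic probability comparison bound,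
obtained by interchanging the roles of the two measures. -/
theorem lpcb_finite_lower {S : Type*} [Fintype S] (P Q : S → ℝ) (A : Finset S) (α : ℝ)
    (hα : 1 < α)
    (hPnonneg : ∀ i, 0 ≤ P i) (hPsum : ∑ i, P i = 1)
    (hQnonneg : ∀ i, 0 ≤ Q i) (hQsum : ∑ i, Q i = 1) :
    ((1 / α : ℝ) : EReal) * elog (∑ i ∈ A, P i)
      ≥ ((1 / (α - 1) : ℝ) : EReal) * elog (∑ i ∈ A, Q i) - renyiDiv α Q P := by
  classical
  have hα0 : (0:ℝ) < α := by linarith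
  have hβ0 : (0:ℝ) < α - 1 := by linarith
  by_cases hsupp : ∀ i, P i = 0 → Q i = 0
  · -- support condition holds
    rw [renyiDiv, if_pos hsupp]
    by_cases hQA : (∑ i ∈ A, Q i) = 0
    · have h0 : elog (∑ i ∈ A, Q i) = ⊥ := by rw [elog, if_pos hQA]
      have h1 : ((1 / (α - 1) : ℝ) : EReal) * (⊥ : EReal) = ⊥ :=
        EReal.mul_bot_of_pos (by exact_mod_cast (by positivity : (0:ℝ) < 1/(α-1)))
      rw [h0, h1]
      simp
    · -- Q(A) > 0
      have hQApos : 0 < ∑ i ∈ A, Q i :=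
        lt_of_le_of_ne (Finset.sum_nonneg fun i _ => hQnonneg i) (Ne.symm hQA)
      obtain ⟨j, hjA, hj⟩ : ∃ j ∈ A, 0 < Q j := by
        by_contra h
        push_neg at h
        have : ∑ i ∈ A, Q i = 0 := Finset.sum_eq_zero fun i hi =>
          le_antisymm (h i hi) (hQnonneg i)
        exact hQA this
      have hPj : 0 < P j := by
        rcases lt_or_eq_of_le (hPnonneg j) with h | h
        · exact h
        · exact absurd (hsupp j h.symm) (ne_of_gt hj)
      have hPApos : 0 < ∑ i ∈ A, P i :=
        lt_of_lt_of_le hPj (Finset.single_le_sum (fun i _ => hPnonneg i) hjA)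
      set Z : ℝ := ∑ i, Q i ^ α * P i ^ (1 - α) with hZ
      have hterm : ∀ i, 0 ≤ Q i ^ α * P i ^ (1 - α) := fun i =>
        mul_nonneg (Real.rpow_nonneg (hQnonneg i) _) (Real.rpow_nonneg (hPnonneg i) _)
      have hZpos : 0 < Z := by
        have hjterm : 0 < Q j ^ α * P j ^ (1 - α) :=
          mul_pos (Real.rpow_pos_of_pos hj _) (Real.rpow_pos_of_pos hPj _)
        exact lt_of_lt_of_le hjterm
          (Finset.single_le_sum (fun i _ => hterm i) (Finset.mem_univ j))
      -- Hölder
      have hpq : Real.HolderConjugate α (α / (α - 1)) :=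
        Real.HolderConjugate.conjExponent hα
      set f : S → ℝ := fun i => Q i * P i ^ ((1 - α)/α) with hf
      set g : S → ℝ := fun i => P i ^ ((α - 1)/α) with hg
      have holder := Real.inner_le_Lp_mul_Lq_of_nonneg (s := A) hpq
        (f := f) (g := g)
        (fun i _ => mul_nonneg (hQnonneg i) (Real.rpow_nonneg (hPnonneg i) _))
        (fun i _ => Real.rpow_nonneg (hPnonneg i) _)
      have hfg : ∀ i, f i * g i = Q i := by
        intro i
        rcases eq_or_lt_of_le (hPnonneg i) with h | h
        · have hQi : Q i = 0 := hsupp i h.symm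
          simp [hf, hg, hQi, ← h, Real.zero_rpow (by positivity : (α-1)/α ≠ 0)]
        · rw [hf, hg]
          simp only
          rw [mul_assoc, ← Real.rpow_add h]
          have he : (1 - α)/α + (α - 1)/α = 0 := by field_simp; ring
          rw [he, Real.rpow_zero, mul_one]
      have hfp : ∀ i, f i ^ α = Q i ^ α * P i ^ (1 - α) := by
        intro i
        rw [hf]
        simp only
        rw [Real.mul_rpow (hQnonneg i) (Real.rpow_nonneg (hPnonneg i) _),
          ← Real.rpow_mul (hPnonneg i)]
        have he : (1 - α)/α * α = 1 - α := by field_simp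
        rw [he]
      have hgq : ∀ i, g i ^ (α / (α - 1)) = P i := by
        intro i
        rw [hg]
        simp only
        rw [← Real.rpow_mul (hPnonneg i)]
        have he : (α - 1)/α * (α/(α - 1)) = 1 := by field_simp
        rw [he, Real.rpow_one]
      simp only [hfg, hfp, hgq] at holder
      have hsub : ∑ i ∈ A, Q i ^ α * P i ^ (1 - α) ≤ Z := by
        rw [hZ]
        exact Finset.sum_le_sum_of_subset_of_nonneg (Finset.subset_univ A)
          (fun i _ _ => hterm i)
      have hinv : 1 / (α / (α - 1)) = (α - 1)/α := by field_simp
      have holder2 : ∑ i ∈ A, Q i ≤ Z ^ (1/α) * (∑ i ∈ A, P i) ^ ((α - 1)/α) := by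
        rw [← hinv]
        refine holder.trans (mul_le_mul_of_nonneg_right ?_ (Real.rpow_nonneg
          (Finset.sum_nonneg fun i _ => hPnonneg i) _))
        exact Real.rpow_le_rpow (Finset.sum_nonneg fun i _ => hterm i) hsub (by positivity)
      -- take logs
      set lP := Real.log (∑ i ∈ A, P i)
      set lQ := Real.log (∑ i ∈ A, Q i)
      set lZ := Real.log Z
      have hlog : lQ ≤ 1/α * lZ + (α - 1)/α * lP := by
        have h1 := Real.log_le_log hQApos holder2
        rwa [Real.log_mul (Real.rpow_pos_of_pos hZpos _).ne'
          (Real.rpow_pos_of_pos hPApos _).ne', Real.log_rpow hZpos,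
          Real.log_rpow hPApos] at h1
      -- real inequality
      have key : 1/(α - 1) * lQ - 1/(α*(α - 1)) * lZ ≤ 1/α * lP := by
        have h2 : α * lQ ≤ lZ + (α - 1) * lP := by
          have h3 := mul_le_mul_of_nonneg_left hlog hα0.le
          calc α * lQ ≤ α * (1/α * lZ + (α - 1)/α * lP) := h3
            _ = lZ + (α - 1)*lP := by field_simp
        have h3 : (α*(α - 1)) * (1/(α - 1) * lQ - 1/(α*(α - 1)) * lZ)
            ≤ (α*(α - 1)) * (1/α * lP) := by
          have e1 : (α*(α - 1)) * (1/(α - 1) * lQ - 1/(α*(α - 1)) * lZ) = α*lQ - lZ := by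
            field_simp
          have e2 : (α*(α - 1)) * (1/α * lP) = (α - 1)*lP := by
            field_simp
          rw [e1, e2]; linarith
        exact le_of_mul_le_mul_left h3 (by positivity)
      -- convert to EReal
      have hP0 : elog (∑ i ∈ A, P i) = ((lP : ℝ) : EReal) := by
        rw [elog, if_neg hPApos.ne']
      have hQ0 : elog (∑ i ∈ A, Q i) = ((lQ : ℝ) : EReal) := by
        rw [elog, if_neg hQApos.ne']
      rw [hP0, hQ0, ← EReal.coe_mul, ← EReal.coe_mul, ← EReal.coe_sub, ge_iff_le,
        EReal.coe_le_coe_iff]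
      exact key
  · rw [renyiDiv, if_neg hsupp]
    simp
end

section
/- For each n ∈ ℕ let S_n be a finite set, let P_n and Q_n be probability distributions on S_n, and let A_n ⊆ S_n be an event. Fix α > 1 and define (as extended reals) E_*(P) = −limsup_{n→∞} (1/n)·ln P_n(A_n), E_*(Q) = −limsup_{n→∞} (1/n)·ln Q_n(A_n), and Δ_α = limsup_{n→∞} (1/n)·D_α(P_n‖Q_n). Then (1/(α−1))·E_*(P) ≥ (1/α)·E_*(Q) − Δ_α; equivalently, E_*(P) ≥ ((α−1)/α)·E_*(Q) − (α−1)·Δ_α. -/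
open scoped BigOperators

open Filter

/-- Multiplication by a positive real is an order isomorphism of `EReal`. -/
noncomputable def erealMulIso (r : ℝ) (hr : 0 < r) : EReal ≃o EReal where
  toFun x := (r : EReal) * x
  invFun x := ((r⁻¹ : ℝ) : EReal) * x
  left_inv x := by
    show ((r⁻¹ : ℝ) : EReal) * ((r : EReal) * x) = x
    rw [← mul_assoc, ← EReal.coe_mul, inv_mul_cancel₀ hr.ne', EReal.coe_one, one_mul]
  right_inv x := by
    show ((r : EReal) : EReal) * (((r⁻¹ : ℝ) : EReal) * x) = x
    rw [← mul_assoc, ← EReal.coe_mul, mul_inv_cancel₀ hr.ne', EReal.coe_one, one_mul]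
  map_rel_iff' := by
    intro x y
    constructor
    · intro h
      have hr' : (0 : EReal) ≤ ((r⁻¹ : ℝ) : EReal) := by
        exact_mod_cast (inv_pos.2 hr).le
      have := mul_le_mul_of_nonneg_left h hr'
      simp only [Equiv.coe_fn_mk] at this
      rwa [← mul_assoc, ← mul_assoc, ← EReal.coe_mul, inv_mul_cancel₀ hr.ne',
        EReal.coe_one, one_mul, one_mul] at this
    · intro h
      exact mul_le_mul_of_nonneg_left h (by exact_mod_cast hr.le)

lemma limsup_coe_mul {r : ℝ} (hr : 0 < r) (u : ℕ → EReal) :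
    limsup (fun n => (r : EReal) * u n) atTop = (r : EReal) * limsup u atTop :=
  ((erealMulIso r hr).limsup_apply).symm

lemma coe_mul_ne_top {r : ℝ} (hr : 0 < r) {x : EReal} (hx : x ≠ ⊤) : (r : EReal) * x ≠ ⊤ := by
  induction x with
  | bot => rw [EReal.coe_mul_bot_of_pos hr]; exact bot_ne_top
  | coe x => rw [← EReal.coe_mul]; exact EReal.coe_ne_top _
  | top => exact absurd rfl hx

/-- Core real inequality (Jensen / reverse Hölder). -/
lemma core_sum_bound {S : Type*} [Fintype S] {P Q : S → ℝ} (A : Finset S) {α : ℝ}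
    (hα : 1 < α) (hP : ∀ i, 0 ≤ P i) (hQ : ∀ i, 0 ≤ Q i)
    (hsupp : ∀ i, Q i = 0 → P i = 0) (hQA : 0 < ∑ i ∈ A, Q i) :
    (∑ i ∈ A, P i) ^ α * (∑ i ∈ A, Q i) ^ (1 - α) ≤ ∑ i, P i ^ α * Q i ^ (1 - α) := by
  set qA := ∑ i ∈ A, Q i with hqA
  set pA := ∑ i ∈ A, P i with hpA
  have hpA0 : 0 ≤ pA := Finset.sum_nonneg fun i _ => hP i
  have hterm : ∀ i, 0 ≤ P i ^ α * Q i ^ (1 - α) := fun i =>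
    mul_nonneg (Real.rpow_nonneg (hP i) α) (Real.rpow_nonneg (hQ i) (1 - α))
  have hsub : ∑ i ∈ A, P i ^ α * Q i ^ (1 - α) ≤ ∑ i, P i ^ α * Q i ^ (1 - α) :=
    Finset.sum_le_sum_of_subset_of_nonneg (Finset.subset_univ A) fun i _ _ => hterm i
  refine le_trans ?_ hsub
  -- Jensen's inequality for x ↦ x^α
  have h1 := Real.rpow_arith_mean_le_arith_mean_rpow A
      (fun i => Q i / qA) (fun i => if Q i = 0 then 0 else P i / Q i)
      (fun i _ => div_nonneg (hQ i) hQA.le)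
      (by rw [← Finset.sum_div, ← hqA, div_self hQA.ne'])
      (fun i _ => by split
                     · exact le_refl 0
                     · exact div_nonneg (hP i) (hQ i)) hα.le
  have e1 : ∑ i ∈ A, (Q i / qA) * (if Q i = 0 then 0 else P i / Q i) = pA / qA := by
    rw [hpA, Finset.sum_div]
    refine Finset.sum_congr rfl fun i _ => ?_
    by_cases h : Q i = 0
    · simp [h, hsupp i h]
    · rw [if_neg h]; field_simp
  have e2 : ∑ i ∈ A, (Q i / qA) * (if Q i = 0 then 0 else P i / Q i) ^ α
      = (∑ i ∈ A, P i ^ α * Q i ^ (1 - α)) / qA := by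
    rw [Finset.sum_div]
    refine Finset.sum_congr rfl fun i _ => ?_
    by_cases h : Q i = 0
    · rw [if_pos h, h, hsupp i h]
      rw [Real.zero_rpow (by linarith : α ≠ 0), Real.zero_rpow (by linarith : (1:ℝ) - α ≠ 0)]
      simp
    · have hQi : 0 < Q i := lt_of_le_of_ne (hQ i) (Ne.symm h)
      rw [if_neg h, Real.div_rpow (hP i) (hQ i)]
      rw [show (1 : ℝ) - α = 1 + (-α) by ring, Real.rpow_add hQi, Real.rpow_one,
        Real.rpow_neg (hQ i)]
      field_simp
  rw [e1, e2, Real.div_rpow hpA0 hQA.le] at h1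
  have hq1 : qA ^ (1 - α) = qA / qA ^ α := by
    rw [show (1 : ℝ) - α = 1 - α by rfl, Real.rpow_sub hQA, Real.rpow_one]
  rw [hq1]
  have h2 := mul_le_mul_of_nonneg_right h1 hQA.le
  rw [div_mul_cancel₀ _ hQA.ne'] at h2
  calc pA ^ α * (qA / qA ^ α) = pA ^ α / qA ^ α * qA := by ring
    _ ≤ _ := h2


lemma pointwise_bound {S : Type*} [Fintype S] {P Q : S → ℝ} (A : Finset S) {α : ℝ}
    (hα : 1 < α) (hP : ∀ i, 0 ≤ P i) (hQ : ∀ i, 0 ≤ Q i) {t : ℝ} (ht : 0 ≤ t) :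
    (t : EReal) * elog (∑ i ∈ A, P i)
      + (((α - 1) / α : ℝ) : EReal) * (-((t : EReal) * elog (∑ i ∈ A, Q i)))
      ≤ ((α - 1 : ℝ) : EReal) * ((t : EReal) * renyiDiv α P Q) := by
  rcases eq_or_lt_of_le ht with rfl | ht'
  · simp
  have hα1 : (0:ℝ) < α - 1 := by linarith
  have hα0 : (0:ℝ) < α := by linarith
  rw [renyiDiv]
  split_ifs with hsupp
  · by_cases hQA : (∑ i ∈ A, Q i) = 0
    · have hPA : (∑ i ∈ A, P i) = 0 := Finset.sum_eq_zero fun i hi =>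
        hsupp i ((Finset.sum_eq_zero_iff_of_nonneg (fun j _ => hQ j)).1 hQA i hi)
      rw [hPA, elog, if_pos rfl, EReal.coe_mul_bot_of_pos ht', EReal.bot_add]
      exact bot_le
    · have hQA' : 0 < ∑ i ∈ A, Q i :=
        lt_of_le_of_ne (Finset.sum_nonneg fun i _ => hQ i) (Ne.symm hQA)
      by_cases hPA : (∑ i ∈ A, P i) = 0
      · rw [hPA, elog, if_pos rfl, EReal.coe_mul_bot_of_pos ht', EReal.bot_add]
        exact bot_le
      · have hPA' : 0 < ∑ i ∈ A, P i :=
          lt_of_le_of_ne (Finset.sum_nonneg fun i _ => hP i) (Ne.symm hPA)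
        rw [elog, if_neg hPA, elog, if_neg hQA]
        -- real inequality
        have hcore := core_sum_bound A hα hP hQ hsupp hQA'
        have hprod : (0:ℝ) < (∑ i ∈ A, P i) ^ α * (∑ i ∈ A, Q i) ^ (1 - α) := by positivity
        have hSpos : 0 < ∑ i, P i ^ α * Q i ^ (1 - α) := lt_of_lt_of_le hprod hcore
        have hlog : α * Real.log (∑ i ∈ A, P i) + (1 - α) * Real.log (∑ i ∈ A, Q i)
            ≤ Real.log (∑ i, P i ^ α * Q i ^ (1 - α)) := by
          have h := Real.log_le_log hprod hcore
          rwa [Real.log_mul (by positivity) (by positivity),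
            Real.log_rpow hPA', Real.log_rpow hQA'] at h
        have key := mul_le_mul_of_nonneg_left hlog
          (le_of_lt (by positivity : (0:ℝ) < t / α))
        have hαne : α ≠ 0 := ne_of_gt hα0
        have hα1ne : α - 1 ≠ 0 := ne_of_gt hα1
        have hfin : t * Real.log (∑ i ∈ A, P i)
            + (α - 1) / α * (-(t * Real.log (∑ i ∈ A, Q i)))
            ≤ (α - 1) * (t * (1 / (α * (α - 1)) * Real.log (∑ i, P i ^ α * Q i ^ (1 - α)))) := by
          have e1 : t * Real.log (∑ i ∈ A, P i)
              + (α - 1) / α * (-(t * Real.log (∑ i ∈ A, Q i)))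
              = t / α * (α * Real.log (∑ i ∈ A, P i)
                + (1 - α) * Real.log (∑ i ∈ A, Q i)) := by
            field_simp
            ring
          have e2 : (α - 1) * (t * (1 / (α * (α - 1))
                * Real.log (∑ i, P i ^ α * Q i ^ (1 - α))))
              = t / α * Real.log (∑ i, P i ^ α * Q i ^ (1 - α)) := by
            field_simp
          rw [e1, e2]
          exact key
        exact_mod_cast hfin
  · rw [EReal.coe_mul_top_of_pos ht', EReal.coe_mul_top_of_pos hα1]
    exact le_top

/-- Asymptotic consequence of the LPCB: lower bound on the exponential decay rate
under `P` in terms of that under `Q` and the normalized Rényi divergence. -/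
theorem lpcb_exponential_rate (S : ℕ → Type*) [∀ n, Fintype (S n)]
    (P Q : ∀ n, S n → ℝ) (A : ∀ n, Finset (S n)) (α : ℝ)
    (hα : 1 < α)
    (hPnonneg : ∀ n i, 0 ≤ P n i) (hPsum : ∀ n, ∑ i, P n i = 1)
    (hQnonneg : ∀ n i, 0 ≤ Q n i) (hQsum : ∀ n, ∑ i, Q n i = 1)
    (EP EQ Δ : EReal)
    (hEP : EP = - Filter.limsup
      (fun n : ℕ => ((1 / (n : ℝ) : ℝ) : EReal) * elog (∑ i ∈ A n, P n i)) Filter.atTop)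
    (hEQ : EQ = - Filter.limsup
      (fun n : ℕ => ((1 / (n : ℝ) : ℝ) : EReal) * elog (∑ i ∈ A n, Q n i)) Filter.atTop)
    (hΔ : Δ = Filter.limsup
      (fun n : ℕ => ((1 / (n : ℝ) : ℝ) : EReal) * renyiDiv α (P n) (Q n)) Filter.atTop) :
    ((1 / (α - 1) : ℝ) : EReal) * EP ≥ ((1 / α : ℝ) : EReal) * EQ - Δ := by
  classical
  have hα1 : (0:ℝ) < α - 1 := by linarith
  have hα0 : (0:ℝ) < α := by linarith
  have hc : (0:ℝ) < (α - 1)/α := by positivity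
  set a : ℕ → EReal := fun n => ((1 / (n : ℝ) : ℝ) : EReal) * elog (∑ i ∈ A n, P n i) with ha
  set b : ℕ → EReal := fun n => ((1 / (n : ℝ) : ℝ) : EReal) * elog (∑ i ∈ A n, Q n i) with hb
  set d : ℕ → EReal := fun n => ((1 / (n : ℝ) : ℝ) : EReal) * renyiDiv α (P n) (Q n) with hd
  set g : ℕ → EReal := fun n => (((α - 1) / α : ℝ) : EReal) * (- b n) with hg
  by_cases hΔtop : Δ = ⊤
  · rw [hΔtop, EReal.sub_top]; exact bot_le
  by_cases hEPtop : EP = ⊤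
  · rw [hEPtop, EReal.coe_mul_top_of_pos (by positivity)]
    exact le_top
  by_cases hEQbot : EQ = ⊥
  · rw [hEQbot, EReal.coe_mul_bot_of_pos (by positivity), EReal.bot_sub]
    exact bot_le
  have key_le : ∀ (R : ∀ n, S n → ℝ), (∀ n i, 0 ≤ R n i) → (∀ n, ∑ i, R n i = 1) →
      ∀ n : ℕ, ((1 / (n : ℝ) : ℝ) : EReal) * elog (∑ i ∈ A n, R n i) ≤ 0 := by
    intro R hR hRs n
    have h1 : elog (∑ i ∈ A n, R n i) ≤ 0 := by
      rw [elog]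
      split_ifs with h
      · exact bot_le
      · have h0 : (0:ℝ) ≤ ∑ i ∈ A n, R n i := Finset.sum_nonneg fun i _ => hR n i
        have h1 : (∑ i ∈ A n, R n i) ≤ 1 := by
          rw [← hRs n]
          exact Finset.sum_le_sum_of_subset_of_nonneg (Finset.subset_univ _)
            fun i _ _ => hR n i
        exact_mod_cast Real.log_nonpos h0 h1
    calc ((1 / (n : ℝ) : ℝ) : EReal) * elog (∑ i ∈ A n, R n i)
        ≤ ((1 / (n : ℝ) : ℝ) : EReal) * 0 := mul_le_mul_of_nonneg_left h1
          (by exact_mod_cast div_nonneg zero_le_one (Nat.cast_nonneg n))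
      _ = 0 := mul_zero _
  have hLPle : limsup a atTop ≤ 0 :=
    limsup_le_of_le (by isBoundedDefault) (Eventually.of_forall (key_le P hPnonneg hPsum))
  have hLQle : limsup b atTop ≤ 0 :=
    limsup_le_of_le (by isBoundedDefault) (Eventually.of_forall (key_le Q hQnonneg hQsum))
  have hpt : ∀ n, a n + g n ≤ ((α - 1 : ℝ) : EReal) * d n := fun n =>
    pointwise_bound (A n) hα (hPnonneg n) (hQnonneg n)
      (div_nonneg zero_le_one (Nat.cast_nonneg n))
  have hliminf : liminf g atTop = - ((((α - 1) / α : ℝ) : EReal) * limsup b atTop) := by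
    have hge : g = - fun n => (((α - 1) / α : ℝ) : EReal) * b n := by
      funext n
      show (((α - 1) / α : ℝ) : EReal) * (- b n) = -((((α - 1) / α : ℝ) : EReal) * b n)
      rw [mul_neg]
    rw [hge, EReal.liminf_neg, limsup_coe_mul hc b]
  have hmaster : limsup a atTop + - ((((α - 1) / α : ℝ) : EReal) * limsup b atTop)
      ≤ ((α - 1 : ℝ) : EReal) * Δ := by
    rw [← hliminf]
    calc limsup a atTop + liminf g atTop ≤ limsup (a + g) atTop := EReal.le_limsup_add
      _ ≤ limsup (fun n => ((α - 1 : ℝ) : EReal) * d n) atTop :=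
          limsup_le_limsup (Eventually.of_forall hpt)
      _ = ((α - 1 : ℝ) : EReal) * Δ := by rw [limsup_coe_mul hα1 d, hΔ]
  have hLPbot : limsup a atTop ≠ ⊥ := by
    intro h
    apply hEPtop
    rw [hEP, h]
    simp
  have hLPtop : limsup a atTop ≠ ⊤ :=
    ne_of_lt (lt_of_le_of_lt hLPle (by exact_mod_cast EReal.zero_lt_top))
  have hLQtop : limsup b atTop ≠ ⊤ :=
    ne_of_lt (lt_of_le_of_lt hLQle (by exact_mod_cast EReal.zero_lt_top))
  have hLQbot : limsup b atTop ≠ ⊥ := by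
    intro h
    apply coe_mul_ne_top hα1 hΔtop
    apply top_le_iff.1
    refine le_trans ?_ hmaster
    rw [h, EReal.coe_mul_bot_of_pos hc, EReal.neg_bot,
      EReal.add_top_of_ne_bot hLPbot]
  obtain ⟨lp, hlp⟩ : ∃ lp : ℝ, limsup a atTop = (lp : EReal) := by
    lift limsup a atTop to ℝ using ⟨hLPtop, hLPbot⟩ with lp
    exact ⟨lp, rfl⟩
  obtain ⟨lq, hlq⟩ : ∃ lq : ℝ, limsup b atTop = (lq : EReal) := by
    lift limsup b atTop to ℝ using ⟨hLQtop, hLQbot⟩ with lq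
    exact ⟨lq, rfl⟩
  rw [hlp, hlq] at hmaster
  have hΔbot : Δ ≠ ⊥ := by
    intro h
    rw [h, EReal.coe_mul_bot_of_pos hα1, le_bot_iff] at hmaster
    rw [← EReal.coe_mul, ← EReal.coe_neg, ← EReal.coe_add] at hmaster
    exact EReal.coe_ne_bot _ hmaster
  obtain ⟨dd, hdd⟩ : ∃ dd : ℝ, Δ = (dd : EReal) := by
    lift Δ to ℝ using ⟨hΔtop, hΔbot⟩ with dd
    exact ⟨dd, rfl⟩
  rw [hdd] at hmaster
  have hR : lp - (α - 1) / α * lq ≤ (α - 1) * dd := by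
    rw [← EReal.coe_mul, ← EReal.coe_neg, ← EReal.coe_add, ← EReal.coe_mul,
      EReal.coe_le_coe_iff] at hmaster
    linarith [hmaster]
  have hld : limsup d atTop = (dd : EReal) := by rw [← hΔ, hdd]
  rw [hEP, hEQ, hΔ, hld, hlp, hlq]
  rw [← EReal.coe_neg, ← EReal.coe_neg, ← EReal.coe_mul, ← EReal.coe_mul,
    ← EReal.coe_sub, ge_iff_le, EReal.coe_le_coe_iff]
  have hαne : α ≠ 0 := ne_of_gt hα0
  have hα1ne : α - 1 ≠ 0 := ne_of_gt hα1
  have he : (1 / (α - 1)) * -lp = -lp / (α - 1) := by ring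
  rw [he, le_div_iff₀ hα1]
  have e : (1 / α * -lq - dd) * (α - 1)
      = -lp + (lp - (α - 1) / α * lq) - (α - 1) * dd := by
    field_simp
    ring
  rw [e]
  linarith [hR]
end

section
/- Let Y be a finite set and let q be a probability distribution on Y with q(y) > 0 for all y. Fix α > 1. Then there exist constants C > 0 and η ∈ (0,1) such that for every function ε : Y → ℝ satisfying ∑_y q(y)ε(y) = 0 and ‖ε‖ := max_y |ε(y)| ≤ η, the function p(y) = q(y)(1+ε(y)) is a probability distribution on Y with full support, and D_α(q‖p) ≤ (1/2)·∑_y q(y)ε(y)² + C·‖ε‖³. -/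
open scoped BigOperators

private lemma hasDerivAt_one_add_rpow (p : ℝ) {t : ℝ} (ht : 0 < 1 + t) :
    HasDerivAt (fun u : ℝ => (1 + u) ^ p) (p * (1 + t) ^ (p - 1)) t := by
  have h0 : HasDerivAt (fun u : ℝ => 1 + u) 1 t := by
    simpa using (hasDerivAt_id t).const_add (1 : ℝ)
  have := (Real.hasDerivAt_rpow_const (p := p) (Or.inl ht.ne')).comp t h0
  simpa [Function.comp_def] using this

private lemma abs_le_of_mem_uIcc {u t : ℝ} (h : u ∈ Set.uIcc 0 t) : |u| ≤ |t| := by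
  rcases Set.mem_uIcc.mp h with ⟨h1, h2⟩ | ⟨h1, h2⟩
  · rw [abs_of_nonneg h1]; exact le_trans h2 (le_abs_self t)
  · rw [abs_of_nonpos h2]; linarith [neg_abs_le t]

private lemma taylor_upper (α : ℝ) (hα : 1 < α) {x : ℝ} (hx : |x| ≤ 1 / 2) :
    (1 + x) ^ (1 - α) ≤ 1 - (α - 1) * x + (α * (α - 1) / 2) * x ^ 2
      + (α * (α - 1) * ((α + 1) * (2 : ℝ) ^ (α + 2))) * |x| ^ 3 := by
  set s : Set ℝ := Set.Icc (-(1 : ℝ) / 2) (1 / 2) with hs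
  have hxs : x ∈ s := ⟨by linarith [(abs_le.mp hx).1], (abs_le.mp hx).2⟩
  have h0s : (0 : ℝ) ∈ s := ⟨by norm_num, by norm_num⟩
  have hpos : ∀ t ∈ s, (0 : ℝ) < 1 + t := fun t ht => by
    have h := ht.1; linarith
  set K : ℝ := (α + 1) * (2 : ℝ) ^ (α + 2) with hK
  have hKpos : 0 < K := by
    have h1 : (0:ℝ) < (2:ℝ) ^ (α + 2) := Real.rpow_pos_of_pos (by norm_num) _
    have h2 : (0:ℝ) < α + 1 := by linarith
    positivity
  set A : ℝ := α * (α - 1) with hA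
  have hApos : 0 < A := mul_pos (by linarith) (by linarith)
  -- step 1 : Lipschitz bound on (1+t)^(1-α-2)
  have L1 : ∀ t ∈ s, |(1 + t) ^ (1 - α - 2) - 1| ≤ K * |t| := by
    intro t ht
    have key := (convex_Icc (-(1 : ℝ) / 2) (1/2)).norm_image_sub_le_of_norm_hasDerivWithin_le
      (C := K)
      (f := fun u => (1 + u) ^ (1 - α - 2))
      (f' := fun u => (1 - α - 2) * (1 + u) ^ (1 - α - 2 - 1))
      (fun u hu => (hasDerivAt_one_add_rpow _ (hpos u hu)).hasDerivWithinAt)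
      (fun u hu => by
        rw [Real.norm_eq_abs, abs_mul, abs_of_nonneg (Real.rpow_nonneg (hpos u hu).le _)]
        have h1 : |1 - α - 2| = α + 1 := by rw [abs_of_nonpos (by linarith)]; ring
        have h2 : (1 + u) ^ (1 - α - 2 - 1) ≤ ((1:ℝ)/2) ^ (1 - α - 2 - 1) :=
          Real.rpow_le_rpow_of_nonpos (by norm_num) (by linarith [hu.1]) (by linarith)
        have h3 : ((1:ℝ)/2) ^ (1 - α - 2 - 1) = (2:ℝ) ^ (α + 2) := by
          rw [one_div, Real.inv_rpow (by norm_num), ← Real.rpow_neg (by norm_num)]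
          congr 1; ring
        rw [h1, hK]
        exact mul_le_mul_of_nonneg_left (h2.trans_eq h3) (by linarith))
      h0s ht
    simpa [Real.one_rpow] using key
  -- step 2 : bound on g'
  have L2 : ∀ t ∈ s,
      |(1 - α) * (1 + t) ^ (1 - α - 1) - (1 - α) - (1 - α) * (1 - α - 1) * t| ≤ (A * K) * t ^ 2 := by
    intro t ht
    have hsub : Set.uIcc (0:ℝ) t ⊆ s := Set.ordConnected_Icc.uIcc_subset h0s ht
    have key := (convex_uIcc (0:ℝ) t).norm_image_sub_le_of_norm_hasDerivWithin_le
      (C := A * K * |t|)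
      (f := fun u => (1 - α) * (1 + u) ^ (1 - α - 1) - (1 - α) - (1 - α) * (1 - α - 1) * u)
      (f' := fun u => (1 - α) * (1 - α - 1) * ((1 + u) ^ (1 - α - 2) - 1))
      (fun u hu => by
        have hu1 : (0:ℝ) < 1 + u := hpos u (hsub hu)
        have hd : HasDerivAt
            (fun v => (1 - α) * (1 + v) ^ (1 - α - 1) - (1 - α) - (1 - α) * (1 - α - 1) * v)
            ((1 - α) * ((1 - α - 1) * (1 + u) ^ (1 - α - 1 - 1)) - (1 - α) * (1 - α - 1) * 1) u := by
          exact (((hasDerivAt_one_add_rpow _ hu1).const_mul _).sub_const _).sub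
            ((hasDerivAt_id u).const_mul _)
        have e1 : (1 - α - 1 - 1 : ℝ) = 1 - α - 2 := by ring
        rw [e1] at hd
        have e2 : (1 - α) * ((1 - α - 1) * (1 + u) ^ (1 - α - 2)) - (1 - α) * (1 - α - 1) * 1
            = (1 - α) * (1 - α - 1) * ((1 + u) ^ (1 - α - 2) - 1) := by ring
        rw [e2] at hd
        exact hd.hasDerivWithinAt)
      (fun u hu => by
        rw [Real.norm_eq_abs, abs_mul]
        have e : |(1 - α) * (1 - α - 1)| = A := by
          rw [hA, abs_of_pos (by nlinarith : (0:ℝ) < (1 - α) * (1 - α - 1))]; ring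
        rw [e]
        have h1 := L1 u (hsub hu)
        have h2 : |u| ≤ |t| := abs_le_of_mem_uIcc hu
        have h3 : K * |u| ≤ K * |t| := mul_le_mul_of_nonneg_left h2 hKpos.le
        calc A * |(1 + u) ^ (1 - α - 2) - 1| ≤ A * (K * |t|) :=
              mul_le_mul_of_nonneg_left (h1.trans h3) hApos.le
          _ = A * K * |t| := by ring)
      Set.left_mem_uIcc Set.right_mem_uIcc
    have h0 : (1 - α) * (1 + (0:ℝ)) ^ (1 - α - 1) - (1 - α) - (1 - α) * (1 - α - 1) * 0 = 0 := by
      norm_num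
    rw [h0, sub_zero, sub_zero, Real.norm_eq_abs, Real.norm_eq_abs] at key
    calc |(1 - α) * (1 + t) ^ (1 - α - 1) - (1 - α) - (1 - α) * (1 - α - 1) * t|
        ≤ A * K * |t| * |t| := key
      _ = A * K * t ^ 2 := by rw [mul_assoc, abs_mul_abs_self]; ring
  -- step 3 : bound on g
  have L3 : |(1 + x) ^ (1 - α) - (1 + (1 - α) * x + ((1 - α) * (1 - α - 1) / 2) * x ^ 2)|
      ≤ A * K * |x| ^ 3 := by
    have hsub : Set.uIcc (0:ℝ) x ⊆ s := Set.ordConnected_Icc.uIcc_subset h0s hxs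
    have key := (convex_uIcc (0:ℝ) x).norm_image_sub_le_of_norm_hasDerivWithin_le
      (C := A * K * x ^ 2)
      (f := fun u => (1 + u) ^ (1 - α) - (1 + (1 - α) * u + ((1 - α) * (1 - α - 1) / 2) * u ^ 2))
      (f' := fun u => (1 - α) * (1 + u) ^ (1 - α - 1) - (1 - α) - (1 - α) * (1 - α - 1) * u)
      (fun u hu => by
        have hu1 : (0:ℝ) < 1 + u := hpos u (hsub hu)
        have hd : HasDerivAt
            (fun v => (1 + v) ^ (1 - α) - (1 + (1 - α) * v + ((1 - α) * (1 - α - 1) / 2) * v ^ 2))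
            ((1 - α) * (1 + u) ^ (1 - α - 1) - (0 + (1 - α) * 1 + ((1 - α) * (1 - α - 1) / 2) * (2 * u ^ 1))) u := by
          exact (hasDerivAt_one_add_rpow _ hu1).sub
            (((hasDerivAt_const u 1).add ((hasDerivAt_id u).const_mul _)).add
              ((hasDerivAt_pow 2 u).const_mul _))
        have e2 : (1 - α) * (1 + u) ^ (1 - α - 1) - (0 + (1 - α) * 1 + ((1 - α) * (1 - α - 1) / 2) * (2 * u ^ 1))
            = (1 - α) * (1 + u) ^ (1 - α - 1) - (1 - α) - (1 - α) * (1 - α - 1) * u := by ring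
        rw [e2] at hd
        exact hd.hasDerivWithinAt)
      (fun u hu => by
        rw [Real.norm_eq_abs]
        have h1 := L2 u (hsub hu)
        have h2 : u ^ 2 ≤ x ^ 2 := by
          have := abs_le_of_mem_uIcc hu
          nlinarith [abs_nonneg u, sq_abs u, sq_abs x]
        calc _ ≤ A * K * u ^ 2 := h1
          _ ≤ A * K * x ^ 2 := mul_le_mul_of_nonneg_left h2 (by positivity))
      Set.left_mem_uIcc Set.right_mem_uIcc
    have h0 : (1 + (0:ℝ)) ^ (1 - α) - (1 + (1 - α) * 0 + ((1 - α) * (1 - α - 1) / 2) * 0 ^ 2) = 0 := by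
      norm_num
    rw [h0, sub_zero, sub_zero, Real.norm_eq_abs, Real.norm_eq_abs] at key
    calc _ ≤ A * K * x ^ 2 * |x| := key
      _ = A * K * |x| ^ 3 := by
        rw [← sq_abs x]; ring
  -- conclude
  have h := (abs_le.mp L3).2
  have e1 : (1 - α) * (1 - α - 1) / 2 = α * (α - 1) / 2 := by ring
  rw [hA, hK] at h ⊢
  nlinarith [h]

/-- Second moment bound on the Rényi divergence under a small perturbation of the
reference distribution. -/
theorem renyiDiv_second_moment_bound {Y : Type*} [Fintype Y] (q : Y → ℝ) (α : ℝ)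
    (hα : 1 < α)
    (hqpos : ∀ y, 0 < q y) (hqsum : ∑ y, q y = 1) :
    ∃ C > (0 : ℝ), ∃ η ∈ Set.Ioo (0 : ℝ) 1,
      ∀ ε : Y → ℝ, (∑ y, q y * ε y = 0) → (⨆ y, |ε y|) ≤ η →
        (∀ y, 0 < q y * (1 + ε y)) ∧ (∑ y, q y * (1 + ε y) = 1) ∧
        renyiDiv α q (fun y => q y * (1 + ε y))
          ≤ (((1 / 2) * ∑ y, q y * (ε y) ^ 2 + C * (⨆ y, |ε y|) ^ 3 : ℝ) : EReal) := by
  have hne : Nonempty Y := by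
    by_contra h
    rw [not_nonempty_iff] at h
    rw [Finset.univ_eq_empty, Finset.sum_empty] at hqsum
    norm_num at hqsum
  have hA : (0:ℝ) < α * (α - 1) := mul_pos (by linarith) (by linarith)
  refine ⟨(α + 1) * (2 : ℝ) ^ (α + 2), ?_, 1/2, by norm_num, ?_⟩
  · have h1 : (0:ℝ) < (2:ℝ) ^ (α + 2) := Real.rpow_pos_of_pos (by norm_num) _
    have h2 : (0:ℝ) < α + 1 := by linarith
    positivity
  intro ε hmean hsup
  have hbdd : BddAbove (Set.range fun y => |ε y|) := (Set.finite_range _).bddAbove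
  have hle : ∀ y, |ε y| ≤ ⨆ y, |ε y| := fun y => le_ciSup hbdd y
  set M : ℝ := ⨆ y, |ε y| with hM
  have hεle : ∀ y, |ε y| ≤ 1/2 := fun y => (hle y).trans hsup
  have hM0 : 0 ≤ M := le_trans (abs_nonneg _) (hle (Classical.arbitrary Y))
  have h1ε : ∀ y, (0:ℝ) < 1 + ε y := fun y => by
    have := (abs_le.mp (hεle y)).1; linarith
  have hp : ∀ y, 0 < q y * (1 + ε y) := fun y => mul_pos (hqpos y) (h1ε y)
  have hsum1 : ∑ y, q y * (1 + ε y) = 1 := by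
    have : ∀ y, q y * (1 + ε y) = q y + q y * ε y := fun y => by ring
    rw [Finset.sum_congr rfl fun y _ => this y, Finset.sum_add_distrib, hqsum, hmean, add_zero]
  refine ⟨hp, hsum1, ?_⟩
  have hcond : ∀ i, (fun y => q y * (1 + ε y)) i = 0 → q i = 0 :=
    fun i h => absurd h (hp i).ne'
  rw [renyiDiv, if_pos hcond]
  rw [EReal.coe_le_coe_iff]
  set T : ℝ := ∑ y, q y ^ α * (q y * (1 + ε y)) ^ (1 - α) with hT
  have hTeq : T = ∑ y, q y * (1 + ε y) ^ (1 - α) := by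
    refine Finset.sum_congr rfl fun y _ => ?_
    rw [Real.mul_rpow (hqpos y).le (h1ε y).le, ← mul_assoc, ← Real.rpow_add (hqpos y)]
    have : α + (1 - α) = 1 := by ring
    rw [this, Real.rpow_one]
  have hTpos : 0 < T := by
    rw [hTeq]
    exact Finset.sum_pos
      (fun y _ => mul_pos (hqpos y) (Real.rpow_pos_of_pos (h1ε y) _)) Finset.univ_nonempty
  set K : ℝ := (α + 1) * (2 : ℝ) ^ (α + 2) with hK
  set R : ℝ := (1/2) * ∑ y, q y * (ε y) ^ 2 + K * M ^ 3 with hR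
  have hTle : T ≤ 1 + α * (α - 1) * R := by
    rw [hTeq]
    have step1 : ∑ y, q y * (1 + ε y) ^ (1 - α)
        ≤ ∑ y, q y * (1 - (α - 1) * ε y + (α * (α - 1) / 2) * (ε y) ^ 2
            + (α * (α - 1) * K) * |ε y| ^ 3) := by
      refine Finset.sum_le_sum fun y _ => ?_
      exact mul_le_mul_of_nonneg_left (taylor_upper α hα (hεle y)) (hqpos y).le
    have expand : ∑ y, q y * (1 - (α - 1) * ε y + (α * (α - 1) / 2) * (ε y) ^ 2
            + (α * (α - 1) * K) * |ε y| ^ 3)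
        = 1 + (α * (α - 1) / 2) * ∑ y, q y * (ε y) ^ 2
            + (α * (α - 1) * K) * ∑ y, q y * |ε y| ^ 3 := by
      have e : ∀ y, q y * (1 - (α - 1) * ε y + (α * (α - 1) / 2) * (ε y) ^ 2
            + (α * (α - 1) * K) * |ε y| ^ 3)
          = q y - (α - 1) * (q y * ε y) + (α * (α - 1) / 2) * (q y * (ε y) ^ 2)
            + (α * (α - 1) * K) * (q y * |ε y| ^ 3) := fun y => by ring
      rw [Finset.sum_congr rfl fun y _ => e y]
      rw [Finset.sum_add_distrib, Finset.sum_add_distrib, Finset.sum_sub_distrib,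
        ← Finset.mul_sum, ← Finset.mul_sum, ← Finset.mul_sum, hqsum, hmean]
      ring
    have habs : ∑ y, q y * |ε y| ^ 3 ≤ M ^ 3 := by
      calc ∑ y, q y * |ε y| ^ 3 ≤ ∑ y, q y * M ^ 3 := by
            refine Finset.sum_le_sum fun y _ => ?_
            exact mul_le_mul_of_nonneg_left
              (pow_le_pow_left₀ (abs_nonneg _) (hle y) 3) (hqpos y).le
        _ = M ^ 3 := by rw [← Finset.sum_mul, hqsum, one_mul]
    have hAK : 0 ≤ α * (α - 1) * K := by
      have h1 : (0:ℝ) < (2:ℝ) ^ (α + 2) := Real.rpow_pos_of_pos (by norm_num) _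
      have h2 : (0:ℝ) < α + 1 := by linarith
      rw [hK]; positivity
    calc ∑ y, q y * (1 + ε y) ^ (1 - α) ≤ _ := step1
      _ = _ := expand
      _ ≤ 1 + (α * (α - 1) / 2) * ∑ y, q y * (ε y) ^ 2 + (α * (α - 1) * K) * M ^ 3 := by
          have := mul_le_mul_of_nonneg_left habs hAK
          linarith
      _ = 1 + α * (α - 1) * R := by rw [hR]; ring
  have hlog : Real.log T ≤ α * (α - 1) * R := by
    calc Real.log T ≤ T - 1 := Real.log_le_sub_one_of_pos hTpos
      _ ≤ α * (α - 1) * R := by linarith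
  calc 1 / (α * (α - 1)) * Real.log T ≤ 1 / (α * (α - 1)) * (α * (α - 1) * R) :=
        mul_le_mul_of_nonneg_left hlog (by positivity)
    _ = R := by rw [← mul_assoc, one_div_mul_cancel hA.ne', one_mul]
end

section
/- Let u > 0 and v > 0. Then the supremum over α ∈ [1,∞) of the function α ↦ ((α−1)/α)·u − (α−1)·v equals (√u − √v)² if u ≥ v, and equals 0 if u ≤ v. -/
/-- The supremum over `α ∈ [1,∞)` of `((α-1)/α)·u - (α-1)·v` equals `(√u - √v)²`
when `u ≥ v`, and equals `0` when `u ≤ v`. -/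
theorem sup_alpha_tradeoff (u v : ℝ) (hu : 0 < u) (hv : 0 < v) :
    (v ≤ u → sSup ((fun α : ℝ => ((α - 1) / α) * u - (α - 1) * v) '' Set.Ici (1 : ℝ))
        = (Real.sqrt u - Real.sqrt v) ^ 2) ∧
    (u ≤ v → sSup ((fun α : ℝ => ((α - 1) / α) * u - (α - 1) * v) '' Set.Ici (1 : ℝ))
        = 0) := by
  set a := Real.sqrt u with ha
  set b := Real.sqrt v with hb
  have ha0 : 0 < a := Real.sqrt_pos.mpr hu
  have hb0 : 0 < b := Real.sqrt_pos.mpr hv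
  have ha2 : a ^ 2 = u := Real.sq_sqrt hu.le
  have hb2 : b ^ 2 = v := Real.sq_sqrt hv.le
  have hub : ∀ α : ℝ, 1 ≤ α → ((α - 1) / α) * u - (α - 1) * v ≤ (a - b) ^ 2 := by
    intro α hα
    have hαpos : (0:ℝ) < α := lt_of_lt_of_le one_pos hα
    rw [div_mul_eq_mul_div, sub_le_iff_le_add, div_le_iff₀ hαpos, ← ha2, ← hb2]
    nlinarith [sq_nonneg (a - α * b), mul_pos ha0 hb0]
  constructor
  · intro hvu
    have hab : b ≤ a := Real.sqrt_le_sqrt hvu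
    apply le_antisymm
    · apply Real.sSup_le
      · rintro x ⟨α, hα, rfl⟩
        exact hub α hα
      · positivity
    · apply le_csSup
      · exact ⟨(a - b) ^ 2, by rintro x ⟨α, hα, rfl⟩; exact hub α hα⟩
      · refine ⟨a / b, ?_, ?_⟩
        · exact (one_le_div hb0).mpr hab
        · field_simp
          nlinarith
  · intro huv
    apply le_antisymm
    · apply Real.sSup_le
      · rintro x ⟨α, hα, rfl⟩
        have hαpos : (0:ℝ) < α := lt_of_lt_of_le one_pos hα
        simp only
        rw [div_mul_eq_mul_div, sub_nonpos, div_le_iff₀ hαpos]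
        have hα' : 1 ≤ α := hα
        nlinarith [mul_nonneg (mul_nonneg (sub_nonneg.mpr hα') (sub_nonneg.mpr hα')) hv.le]
      · exact le_refl 0
    · apply le_csSup
      · exact ⟨(a - b) ^ 2, by rintro x ⟨α, hα, rfl⟩; exact hub α hα⟩
      · exact ⟨1, Set.self_mem_Ici, by simp⟩
end

section
/- Let n ≥ 1, σ > 0, s > 0, Γ > 0, and let α > 1 satisfy s > 1 − 1/α. Let C ⊂ ℝⁿ be a nonempty finite set (the codebook) and Π the uniform distribution on C. For t = 1,…,n let g_t : ℝⁿ × ℝ^{t−1} → ℝ be Borel measurable with sup |g_t| ≤ Γ_t, where ∑_{t=1}^{n} Γ_t² ≤ nΓ². Define the conditional densities on ℝⁿ: p(y|x) = (2πσ²)^{−n/2}·exp(−(1/(2σ²))·∑_{t=1}^{n}(y_t − x_t − g_t(x, y^{t−1}))²) and q(y|x) = (2πσ²/s)^{−n/2}·exp(−(s/(2σ²))·∑_{t=1}^{n}(y_t − x_t)²). Then D_α(Q_n‖P_n) := (1/(α(α−1)))·ln( ∑_{x∈C} Π(x)·∫_{ℝⁿ} q(y|x)^{α} p(y|x)^{1−α}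 dy ) satisfies D_α(Q_n‖P_n) ≤ n·ln s/(2(α−1)) − n·ln(1+α(s−1))/(2α(α−1)) + n·s·Γ²/(2σ²·(1+α(s−1))). -/
open MeasureTheory
open scoped BigOperators ENNReal


lemma lintegral_gaussian_shift {b : ℝ} (hb : 0 < b) (μ : ℝ) :
    (∫⁻ c : ℝ, ENNReal.ofReal (Real.exp (-b * (c - μ) ^ 2)))
      = ENNReal.ofReal (Real.sqrt (Real.pi / b)) := by
  have hint : Integrable (fun c : ℝ => Real.exp (-b * (c - μ) ^ 2)) :=
    (integrable_exp_neg_mul_sq hb).comp_sub_right μ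
  rw [← ofReal_integral_eq_lintegral_ofReal hint
    (Filter.Eventually.of_forall fun c => (Real.exp_pos _).le)]
  congr 1
  rw [integral_sub_right_eq_self (fun c => Real.exp (-b * c ^ 2)) μ]
  exact integral_gaussian b

lemma lintegral_pi_prod_le {n : ℕ} (φ : Fin n → (Fin n → ℝ) → ℝ≥0∞) (B : Fin n → ℝ≥0∞)
    (hφm : ∀ t, Measurable (φ t))
    (hdep : ∀ (t : Fin n) (y y' : Fin n → ℝ), (∀ u, u ≤ t → y u = y' u) → φ t y = φ t y')
    (hint : ∀ (t : Fin n) (y : Fin n → ℝ),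
      (∫⁻ c : ℝ, φ t (Function.update y t c)) ≤ B t) :
    (∫⁻ y : Fin n → ℝ, ∏ t, φ t y) ≤ ∏ t, B t := by
  classical
  have hfm : Measurable (fun y => ∏ t, φ t y) := Finset.measurable_prod _ (fun t _ => hφm t)
  -- main induction
  have main : ∀ d k, k + d = n → ∀ y : Fin n → ℝ,
      (MeasureTheory.lmarginal (fun _ => (volume : Measure ℝ))
          (Finset.univ.filter (fun t : Fin n => k ≤ (t : ℕ))) (fun y => ∏ t, φ t y)) y
        ≤ (∏ t ∈ Finset.univ.filter (fun t : Fin n => (t : ℕ) < k), φ t y)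
          * ∏ t ∈ Finset.univ.filter (fun t : Fin n => k ≤ (t : ℕ)), B t := by
    intro d
    induction d with
    | zero =>
      intro k hk y
      have h1 : Finset.univ.filter (fun t : Fin n => k ≤ (t : ℕ)) = (∅ : Finset (Fin n)) := by
        apply Finset.eq_empty_of_forall_notMem
        intro t ht
        simp only [Finset.mem_filter] at ht
        omega
      have h2 : Finset.univ.filter (fun t : Fin n => (t : ℕ) < k) = Finset.univ := by
        apply Finset.filter_true_of_mem; intro t _; omega
      rw [h1, h2]
      simp [MeasureTheory.lmarginal_empty]
    | succ d ih =>
      intro k hk y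
      have hkn : k < n := by omega
      set i : Fin n := ⟨k, hkn⟩ with hidef
      have hv : (i : ℕ) = k := rfl
      have hins : Finset.univ.filter (fun t : Fin n => k ≤ (t : ℕ))
          = insert i (Finset.univ.filter (fun t : Fin n => k + 1 ≤ (t : ℕ))) := by
        ext t
        simp only [Finset.mem_filter, Finset.mem_insert, Finset.mem_univ, true_and, hidef]
        constructor
        · intro h
          rcases Nat.lt_or_ge (t : ℕ) (k+1) with h' | h'
          · left; apply Fin.ext; rw [hv]; omega
          · right; exact h'
        · rintro (rfl | h)
          · simp
          · omega
      have hinot : i ∉ Finset.univ.filter (fun t : Fin n => k + 1 ≤ (t : ℕ)) := by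
        simp [hidef]
      rw [hins, MeasureTheory.lmarginal_insert _ hfm hinot]
      have step1 : ∀ c : ℝ,
          (MeasureTheory.lmarginal (fun _ => (volume : Measure ℝ))
            (Finset.univ.filter (fun t : Fin n => k + 1 ≤ (t : ℕ))) (fun y => ∏ t, φ t y))
            (Function.update y i c)
          ≤ (∏ t ∈ Finset.univ.filter (fun t : Fin n => (t : ℕ) < k), φ t y)
            * φ i (Function.update y i c)
            * ∏ t ∈ Finset.univ.filter (fun t : Fin n => k + 1 ≤ (t : ℕ)), B t := by
        intro c
        refine le_trans (ih (k+1) (by omega) (Function.update y i c)) ?_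
        have hsplit : Finset.univ.filter (fun t : Fin n => (t : ℕ) < k + 1)
            = insert i (Finset.univ.filter (fun t : Fin n => (t : ℕ) < k)) := by
          ext t
          simp only [Finset.mem_filter, Finset.mem_insert, Finset.mem_univ, true_and, hidef]
          constructor
          · intro h
            rcases Nat.lt_or_ge (t : ℕ) k with h' | h'
            · right; exact h'
            · left; apply Fin.ext; rw [hv]; omega
          · rintro (rfl | h)
            · simp
            · omega
        have hinot2 : i ∉ Finset.univ.filter (fun t : Fin n => (t : ℕ) < k) := by
          simp [hidef]
        rw [hsplit, Finset.prod_insert hinot2]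
        have heq : ∀ t ∈ Finset.univ.filter (fun t : Fin n => (t : ℕ) < k),
            φ t (Function.update y i c) = φ t y := by
          intro t ht
          simp only [Finset.mem_filter] at ht
          apply hdep
          intro u hu
          apply Function.update_of_ne
          intro huv
          have : (u : ℕ) ≤ (t : ℕ) := hu
          rw [huv] at this
          simp [hidef] at this
          omega
        rw [Finset.prod_congr rfl heq]
        ring_nf
        apply le_of_eq
        ring
      calc (∫⁻ c : ℝ, (MeasureTheory.lmarginal (fun _ => (volume : Measure ℝ))
            (Finset.univ.filter (fun t : Fin n => k + 1 ≤ (t : ℕ))) (fun y => ∏ t, φ t y))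
            (Function.update y i c))
          ≤ ∫⁻ c : ℝ, (∏ t ∈ Finset.univ.filter (fun t : Fin n => (t : ℕ) < k), φ t y)
              * φ i (Function.update y i c)
              * ∏ t ∈ Finset.univ.filter (fun t : Fin n => k + 1 ≤ (t : ℕ)), B t := by
            exact lintegral_mono step1
        _ = ∫⁻ c : ℝ, ((∏ t ∈ Finset.univ.filter (fun t : Fin n => (t : ℕ) < k), φ t y)
              * ∏ t ∈ Finset.univ.filter (fun t : Fin n => k + 1 ≤ (t : ℕ)), B t)
              * φ i (Function.update y i c) := by
            congr 1; ext c; ring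
        _ = ((∏ t ∈ Finset.univ.filter (fun t : Fin n => (t : ℕ) < k), φ t y)
              * ∏ t ∈ Finset.univ.filter (fun t : Fin n => k + 1 ≤ (t : ℕ)), B t)
            * ∫⁻ c : ℝ, φ i (Function.update y i c) :=
            lintegral_const_mul _ ((hφm i).comp (measurable_update y))
        _ ≤ ((∏ t ∈ Finset.univ.filter (fun t : Fin n => (t : ℕ) < k), φ t y)
              * ∏ t ∈ Finset.univ.filter (fun t : Fin n => k + 1 ≤ (t : ℕ)), B t) * B i := by
            exact mul_le_mul_right (hint i y) _
        _ = (∏ t ∈ Finset.univ.filter (fun t : Fin n => (t : ℕ) < k), φ t y)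
              * ∏ t ∈ insert i (Finset.univ.filter (fun t : Fin n => k + 1 ≤ (t : ℕ))), B t := by
            rw [Finset.prod_insert hinot]; ring
  have h0 := main n 0 (by omega)
  have hu : Finset.univ.filter (fun t : Fin n => 0 ≤ (t : ℕ)) = Finset.univ := by
    apply Finset.filter_true_of_mem; intro t _; omega
  have he : Finset.univ.filter (fun t : Fin n => (t : ℕ) < 0) = (∅ : Finset (Fin n)) := by
    apply Finset.eq_empty_of_forall_notMem; intro t ht; simp at ht
  rw [hu, he] at h0
  have h1 := h0 (fun _ => 0)
  rw [MeasureTheory.lmarginal_univ] at h1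
  simpa [MeasureTheory.volume_pi] using h1

set_option maxHeartbeats 800000 in
lemma gaussian_ratio_integral_bound
    (n : ℕ) (σ s α : ℝ)
    (hσ : 0 < σ) (hs : 0 < s) (hα : 1 < α) (hsα : 1 - 1 / α < s)
    (x : Fin n → ℝ)
    (g : Fin n → (Fin n → ℝ) → (Fin n → ℝ) → ℝ)
    (hgmeas : ∀ t, Measurable (fun z : (Fin n → ℝ) × (Fin n → ℝ) => g t z.1 z.2))
    (hgpast : ∀ t (x : Fin n → ℝ) (y y' : Fin n → ℝ),
      (∀ u : Fin n, u < t → y u = y' u) → g t x y = g t x y')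
    (Γt : Fin n → ℝ)
    (hgbd : ∀ t x y, |g t x y| ≤ Γt t)
    (p q : (Fin n → ℝ) → (Fin n → ℝ) → ℝ)
    (hp : ∀ y x, p y x = (2 * Real.pi * σ ^ 2) ^ (-(n : ℝ) / 2)
      * Real.exp (-(1 / (2 * σ ^ 2)) * ∑ t, (y t - x t - g t x y) ^ 2))
    (hq : ∀ y x, q y x = (2 * Real.pi * σ ^ 2 / s) ^ (-(n : ℝ) / 2)
      * Real.exp (-(s / (2 * σ ^ 2)) * ∑ t, (y t - x t) ^ 2)) :
    (∫ y : Fin n → ℝ, (q y x) ^ α * (p y x) ^ (1 - α))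
      ≤ Real.exp ((n:ℝ) * α / 2 * Real.log s
          - (n:ℝ) / 2 * Real.log (1 + α * (s - 1))
          + α * s * (α - 1) * (∑ t, (Γt t) ^ 2) / (2 * σ ^ 2 * (1 + α * (s - 1)))) := by
  classical
  have hα0 : (0:ℝ) < α := lt_trans one_pos hα
  have hα1 : (0:ℝ) < α - 1 := by linarith
  have hσ2 : (0:ℝ) < σ ^ 2 := by positivity
  set A : ℝ := 1 + α * (s - 1) with hAdef
  have hA : 0 < A := by
    have h1 : 0 < α * (s - (1 - 1/α)) := mul_pos hα0 (sub_pos.mpr hsα)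
    have h2 : α * (1/α) = 1 := by field_simp
    nlinarith
  have h2πσ : (0:ℝ) < 2 * Real.pi * σ ^ 2 := by positivity
  have h2πσs : (0:ℝ) < 2 * Real.pi * σ ^ 2 / s := by positivity
  have hb : (0:ℝ) < A / (2 * σ ^ 2) := by positivity
  set Mlog : ℝ := (n:ℝ) * α / 2 * Real.log s - (n:ℝ) / 2 * Real.log A
      + α * s * (α - 1) * (∑ t, (Γt t) ^ 2) / (2 * σ ^ 2 * A) with hMlogdef
  set L1 : ℝ := Real.log (2 * Real.pi * σ ^ 2 / s) with hL1
  set L2 : ℝ := Real.log (2 * Real.pi * σ ^ 2) with hL2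
  set cK : ℝ := L1 * (-(n:ℝ)/2) * α + L2 * (-(n:ℝ)/2) * (1-α) with hcK
  set E : Fin n → (Fin n → ℝ) → ℝ := fun t y =>
    α * s * (y t - x t) ^ 2 + (1 - α) * (y t - x t - g t x y) ^ 2 with hE
  have hgm : ∀ t, Measurable (fun y : Fin n → ℝ => g t x y) := fun t =>
    (hgmeas t).comp (measurable_const.prodMk measurable_id)
  have hEm : ∀ t, Measurable (E t) := by
    intro t
    have h1 : Measurable fun y : Fin n → ℝ => (y t - x t) ^ 2 :=
      ((measurable_pi_apply t).sub measurable_const).pow_const 2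
    have h2 : Measurable fun y : Fin n → ℝ => (y t - x t - g t x y) ^ 2 :=
      (((measurable_pi_apply t).sub measurable_const).sub (hgm t)).pow_const 2
    exact (h1.const_mul _).add (h2.const_mul _)
  have hfeq : ∀ y : Fin n → ℝ, (q y x) ^ α * (p y x) ^ (1 - α)
      = Real.exp (cK + ∑ t, -(1 / (2 * σ ^ 2)) * E t y) := by
    intro y
    rw [hq, hp, Real.rpow_def_of_pos h2πσs, Real.rpow_def_of_pos h2πσ,
      ← Real.exp_add, ← Real.exp_add,
      Real.rpow_def_of_pos (Real.exp_pos _), Real.log_exp,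
      Real.rpow_def_of_pos (Real.exp_pos _), Real.log_exp, ← Real.exp_add]
    congr 1
    have hsum : ∑ t, -(1 / (2 * σ ^ 2)) * E t y
        = -(1 / (2 * σ ^ 2)) * (α * s * ∑ t, (y t - x t) ^ 2
            + (1 - α) * ∑ t, (y t - x t - g t x y) ^ 2) := by
      rw [← Finset.mul_sum]
      congr 1
      simp only [hE]
      rw [Finset.sum_add_distrib, ← Finset.mul_sum, ← Finset.mul_sum]
    rw [hsum, hcK, hL1, hL2]
    ring
  set φ : Fin n → (Fin n → ℝ) → ℝ≥0∞ := fun t y =>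
    ENNReal.ofReal (Real.exp (-(1 / (2 * σ ^ 2)) * E t y)) with hφ
  set B : Fin n → ℝ≥0∞ := fun t =>
    ENNReal.ofReal (Real.sqrt (Real.pi / (A / (2 * σ ^ 2)))
      * Real.exp (α * s * (α - 1) * (Γt t) ^ 2 / (2 * σ ^ 2 * A))) with hB
  have hφm : ∀ t, Measurable (φ t) := fun t =>
    ENNReal.measurable_ofReal.comp (Real.measurable_exp.comp ((hEm t).const_mul _))
  have hdep : ∀ (t : Fin n) (y y' : Fin n → ℝ), (∀ u, u ≤ t → y u = y' u) → φ t y = φ t y' := by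
    intro t y y' h
    have hgy : g t x y = g t x y' := hgpast t x y y' (fun u hu => h u hu.le)
    simp only [hφ, hE, hgy, h t le_rfl]
  have hσne : σ ≠ 0 := ne_of_gt hσ
  have hAne : A ≠ 0 := ne_of_gt hA
  have hco : (0:ℝ) ≤ α * s * (α - 1) := mul_nonneg (mul_nonneg hα0.le hs.le) hα1.le
  have hD : (0:ℝ) < 2 * σ ^ 2 * A := by positivity
  have hint : ∀ (t : Fin n) (y : Fin n → ℝ),
      (∫⁻ c : ℝ, φ t (Function.update y t c)) ≤ B t := by
    intro t y
    set G : ℝ := g t x y with hG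
    have hGc : ∀ c : ℝ, g t x (Function.update y t c) = G := by
      intro c
      exact hgpast t x _ y (fun u hu => Function.update_of_ne (ne_of_lt hu) c y)
    have halg : ∀ c : ℝ,
        -(1 / (2 * σ ^ 2)) * (α * s * (c - x t) ^ 2 + (1 - α) * (c - x t - G) ^ 2)
        = -(A / (2 * σ ^ 2)) * (c - (x t + (1 - α) * G / A)) ^ 2
          + α * s * (α - 1) * G ^ 2 / (2 * σ ^ 2 * A) := by
      intro c
      rw [hAdef]
      have h1 : (1:ℝ) + α * (s - 1) ≠ 0 := by rw [← hAdef]; exact hAne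
      field_simp
      ring
    have hφc : ∀ c : ℝ, φ t (Function.update y t c)
        = ENNReal.ofReal (Real.exp (α * s * (α - 1) * G ^ 2 / (2 * σ ^ 2 * A)))
          * ENNReal.ofReal
            (Real.exp (-(A / (2 * σ ^ 2)) * (c - (x t + (1 - α) * G / A)) ^ 2)) := by
      intro c
      simp only [hφ, hE, Function.update_self, hGc c]
      rw [halg c, Real.exp_add, ENNReal.ofReal_mul (Real.exp_pos _).le, mul_comm]
    calc (∫⁻ c : ℝ, φ t (Function.update y t c))
        = ENNReal.ofReal (Real.exp (α * s * (α - 1) * G ^ 2 / (2 * σ ^ 2 * A)))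
          * ∫⁻ c : ℝ, ENNReal.ofReal
              (Real.exp (-(A / (2 * σ ^ 2)) * (c - (x t + (1 - α) * G / A)) ^ 2)) := by
          simp_rw [hφc]
          rw [lintegral_const_mul' _ _ ENNReal.ofReal_ne_top]
      _ = ENNReal.ofReal (Real.exp (α * s * (α - 1) * G ^ 2 / (2 * σ ^ 2 * A)))
          * ENNReal.ofReal (Real.sqrt (Real.pi / (A / (2 * σ ^ 2)))) := by
          rw [lintegral_gaussian_shift hb]
      _ ≤ B t := by
          rw [hB, ← ENNReal.ofReal_mul (Real.exp_pos _).le]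
          apply ENNReal.ofReal_le_ofReal
          have hG2 : G ^ 2 ≤ (Γt t) ^ 2 := by
            have h1 := hgbd t x y
            nlinarith [abs_nonneg (g t x y), sq_abs (g t x y)]
          have hexp : Real.exp (α * s * (α - 1) * G ^ 2 / (2 * σ ^ 2 * A))
              ≤ Real.exp (α * s * (α - 1) * (Γt t) ^ 2 / (2 * σ ^ 2 * A)) := by
            apply Real.exp_le_exp.mpr
            exact (div_le_div_iff_of_pos_right hD).mpr (mul_le_mul_of_nonneg_left hG2 hco)
          calc Real.exp (α * s * (α - 1) * G ^ 2 / (2 * σ ^ 2 * A))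
                * Real.sqrt (Real.pi / (A / (2 * σ ^ 2)))
              ≤ Real.exp (α * s * (α - 1) * (Γt t) ^ 2 / (2 * σ ^ 2 * A))
                * Real.sqrt (Real.pi / (A / (2 * σ ^ 2))) :=
                mul_le_mul_of_nonneg_right hexp (Real.sqrt_nonneg _)
            _ = Real.sqrt (Real.pi / (A / (2 * σ ^ 2)))
                * Real.exp (α * s * (α - 1) * (Γt t) ^ 2 / (2 * σ ^ 2 * A)) := mul_comm _ _
  have hmeasf : Measurable fun y : Fin n → ℝ =>
      Real.exp (cK + ∑ t, -(1 / (2 * σ ^ 2)) * E t y) :=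
    Real.measurable_exp.comp (measurable_const.add
      (Finset.measurable_sum _ (fun t _ => ((hEm t).const_mul _))))
  -- comparison of the constant
  have hMcmp : Real.exp cK * ∏ t : Fin n, (Real.sqrt (Real.pi / (A / (2 * σ ^ 2)))
      * Real.exp (α * s * (α - 1) * (Γt t) ^ 2 / (2 * σ ^ 2 * A))) ≤ Real.exp Mlog := by
    have hz : Real.pi / (A / (2 * σ ^ 2)) = 2 * Real.pi * σ ^ 2 / A := by
      field_simp
    have hzpos : (0:ℝ) < 2 * Real.pi * σ ^ 2 / A := by positivity
    have hsq : Real.sqrt (Real.pi / (A / (2 * σ ^ 2)))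
        = Real.exp ((L2 - Real.log A) / 2) := by
      rw [hz, ← Real.exp_log (Real.sqrt_pos.mpr hzpos), Real.log_sqrt hzpos.le,
        Real.log_div (ne_of_gt h2πσ) hAne, hL2]
    have hsumR : ∑ t : Fin n, α * s * (α - 1) * (Γt t) ^ 2 / (2 * σ ^ 2 * A)
        = α * s * (α - 1) * (∑ t, (Γt t) ^ 2) / (2 * σ ^ 2 * A) := by
      rw [Finset.mul_sum, Finset.sum_div]
    rw [Finset.prod_mul_distrib, Finset.prod_const, ← Real.exp_sum, hsumR, hsq,
      Finset.card_univ, Fintype.card_fin, ← Real.exp_nat_mul, ← Real.exp_add, ← Real.exp_add]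
    apply Real.exp_le_exp.mpr
    rw [hcK, hL1, Real.log_div (ne_of_gt h2πσ) (ne_of_gt hs), ← hL2, hMlogdef]
    have heq : (L2 - Real.log s) * (-(n:ℝ)/2) * α + L2 * (-(n:ℝ)/2) * (1-α)
          + (n:ℝ) * ((L2 - Real.log A) / 2)
        = (n:ℝ) * α / 2 * Real.log s - (n:ℝ) / 2 * Real.log A := by ring
    linarith
  -- putting everything together
  have hkey : (∫⁻ y : Fin n → ℝ,
      ENNReal.ofReal (Real.exp (cK + ∑ t, -(1 / (2 * σ ^ 2)) * E t y)))
      ≤ ENNReal.ofReal (Real.exp Mlog) := by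
    have hptwise : ∀ y : Fin n → ℝ,
        ENNReal.ofReal (Real.exp (cK + ∑ t, -(1 / (2 * σ ^ 2)) * E t y))
        = ENNReal.ofReal (Real.exp cK) * ∏ t, φ t y := by
      intro y
      rw [Real.exp_add, ENNReal.ofReal_mul (Real.exp_pos _).le, Real.exp_sum,
        ENNReal.ofReal_prod_of_nonneg (fun t _ => (Real.exp_pos _).le)]
    calc (∫⁻ y : Fin n → ℝ,
          ENNReal.ofReal (Real.exp (cK + ∑ t, -(1 / (2 * σ ^ 2)) * E t y)))
        = ENNReal.ofReal (Real.exp cK) * ∫⁻ y : Fin n → ℝ, ∏ t, φ t y := by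
          simp_rw [hptwise]
          rw [lintegral_const_mul' _ _ ENNReal.ofReal_ne_top]
      _ ≤ ENNReal.ofReal (Real.exp cK) * ∏ t, B t :=
          mul_le_mul_right (lintegral_pi_prod_le φ B hφm hdep hint) _
      _ = ENNReal.ofReal (Real.exp cK * ∏ t : Fin n, (Real.sqrt (Real.pi / (A / (2 * σ ^ 2)))
            * Real.exp (α * s * (α - 1) * (Γt t) ^ 2 / (2 * σ ^ 2 * A)))) := by
          rw [hB, ← ENNReal.ofReal_prod_of_nonneg
            (fun t _ => mul_nonneg (Real.sqrt_nonneg _) (Real.exp_pos _).le),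
            ← ENNReal.ofReal_mul (Real.exp_pos _).le]
      _ ≤ ENNReal.ofReal (Real.exp Mlog) := ENNReal.ofReal_le_ofReal hMcmp
  calc (∫ y : Fin n → ℝ, (q y x) ^ α * (p y x) ^ (1 - α))
      = ∫ y : Fin n → ℝ, Real.exp (cK + ∑ t, -(1 / (2 * σ ^ 2)) * E t y) := by
        exact integral_congr_ae (Filter.Eventually.of_forall hfeq)
    _ = (∫⁻ y : Fin n → ℝ,
          ENNReal.ofReal (Real.exp (cK + ∑ t, -(1 / (2 * σ ^ 2)) * E t y))).toReal :=
        integral_eq_lintegral_of_nonneg_ae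
          (Filter.Eventually.of_forall fun y => (Real.exp_pos _).le)
          hmeasf.aestronglyMeasurable
    _ ≤ (ENNReal.ofReal (Real.exp Mlog)).toReal :=
        ENNReal.toReal_mono ENNReal.ofReal_ne_top hkey
    _ = Real.exp Mlog := ENNReal.toReal_ofReal (Real.exp_pos _).le

/-- Bound on the Rényi divergence of the memoryless Gaussian reference channel `Q_n`
(noise variance `σ²/s`) from the Gaussian channel `P_n` with bounded additive
interference `g_t` (Theorem 3.1 of the paper, divergence estimate). -/
theorem renyiDiv_interference_channel_bound
    (n : ℕ) (hn : 1 ≤ n) (σ s Γ α : ℝ)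
    (hσ : 0 < σ) (hs : 0 < s) (hΓ : 0 < Γ) (hα : 1 < α) (hsα : 1 - 1 / α < s)
    (C : Finset (Fin n → ℝ)) (hC : C.Nonempty)
    (g : Fin n → (Fin n → ℝ) → (Fin n → ℝ) → ℝ)
    (hgmeas : ∀ t, Measurable (fun z : (Fin n → ℝ) × (Fin n → ℝ) => g t z.1 z.2))
    (hgpast : ∀ t (x : Fin n → ℝ) (y y' : Fin n → ℝ),
      (∀ u : Fin n, u < t → y u = y' u) → g t x y = g t x y')
    (Γt : Fin n → ℝ)
    (hgbd : ∀ t x y, |g t x y| ≤ Γt t)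
    (hΓsum : ∑ t, (Γt t) ^ 2 ≤ (n : ℝ) * Γ ^ 2)
    (p q : (Fin n → ℝ) → (Fin n → ℝ) → ℝ)
    (hp : ∀ y x, p y x = (2 * Real.pi * σ ^ 2) ^ (-(n : ℝ) / 2)
      * Real.exp (-(1 / (2 * σ ^ 2)) * ∑ t, (y t - x t - g t x y) ^ 2))
    (hq : ∀ y x, q y x = (2 * Real.pi * σ ^ 2 / s) ^ (-(n : ℝ) / 2)
      * Real.exp (-(s / (2 * σ ^ 2)) * ∑ t, (y t - x t) ^ 2)) :
    (1 / (α * (α - 1))) * Real.log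
        (∑ x ∈ C, (1 / (C.card : ℝ)) * ∫ y : Fin n → ℝ, (q y x) ^ α * (p y x) ^ (1 - α))
      ≤ (n : ℝ) * Real.log s / (2 * (α - 1))
        - (n : ℝ) * Real.log (1 + α * (s - 1)) / (2 * α * (α - 1))
        + (n : ℝ) * s * Γ ^ 2 / (2 * σ ^ 2 * (1 + α * (s - 1))) := by
  classical
  have hα0 : (0:ℝ) < α := lt_trans one_pos hα
  have hα1 : (0:ℝ) < α - 1 := by linarith
  have hσ2 : (0:ℝ) < σ ^ 2 := by positivity
  set A : ℝ := 1 + α * (s - 1) with hAdef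
  have hA : 0 < A := by
    have h1 : 0 < α * (s - (1 - 1/α)) := mul_pos hα0 (sub_pos.mpr hsα)
    have h2 : α * (1/α) = 1 := by field_simp
    nlinarith
  have h2πσ : (0:ℝ) < 2 * Real.pi * σ ^ 2 := by positivity
  have h2πσs : (0:ℝ) < 2 * Real.pi * σ ^ 2 / s := by positivity
  have hb : (0:ℝ) < A / (2 * σ ^ 2) := by positivity
  -- the log of the bound M
  set Mlog : ℝ := (n:ℝ) * α / 2 * Real.log s - (n:ℝ) / 2 * Real.log A
      + α * s * (α - 1) * ((n:ℝ) * Γ ^ 2) / (2 * σ ^ 2 * A) with hMlogdef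
  -- main estimate for each codeword
  have hIx : ∀ x : Fin n → ℝ,
      (∫ y : Fin n → ℝ, (q y x) ^ α * (p y x) ^ (1 - α)) ≤ Real.exp Mlog := by
    intro x
    refine le_trans (gaussian_ratio_integral_bound n σ s α hσ hs hα hsα x g hgmeas hgpast
      Γt hgbd p q hp hq) ?_
    apply Real.exp_le_exp.mpr
    rw [hMlogdef]
    have hco : (0:ℝ) ≤ α * s * (α - 1) :=
      mul_nonneg (mul_nonneg hα0.le hs.le) hα1.le
    have hD : (0:ℝ) < 2 * σ ^ 2 * A := by positivity
    have := (div_le_div_iff_of_pos_right hD).mpr (mul_le_mul_of_nonneg_left hΓsum hco)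
    linarith [this]
  -- nonnegativity of each integral
  have hI0 : ∀ x : Fin n → ℝ,
      0 ≤ ∫ y : Fin n → ℝ, (q y x) ^ α * (p y x) ^ (1 - α) := by
    intro x
    apply integral_nonneg
    intro y
    have hq0 : 0 ≤ q y x := by rw [hq]; positivity
    have hp0 : 0 ≤ p y x := by rw [hp]; positivity
    exact mul_nonneg (Real.rpow_nonneg hq0 _) (Real.rpow_nonneg hp0 _)
  set S : ℝ := ∑ x ∈ C, (1 / (C.card : ℝ))
      * ∫ y : Fin n → ℝ, (q y x) ^ α * (p y x) ^ (1 - α) with hSdef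
  have hcard : (0:ℝ) < (C.card : ℝ) := by
    exact_mod_cast Finset.card_pos.mpr hC
  have hS0 : 0 ≤ S := by
    apply Finset.sum_nonneg
    intro x _
    exact mul_nonneg (by positivity) (hI0 x)
  have hSM : S ≤ Real.exp Mlog := by
    calc S ≤ ∑ _x ∈ C, (1 / (C.card : ℝ)) * Real.exp Mlog := by
          apply Finset.sum_le_sum
          intro x _
          exact mul_le_mul_of_nonneg_left (hIx x) (by positivity)
      _ = Real.exp Mlog := by
          rw [Finset.sum_const, nsmul_eq_mul]
          field_simp
  -- final arithmetic
  have hfinal : (1 / (α * (α - 1))) * Mlog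
      = (n : ℝ) * Real.log s / (2 * (α - 1))
        - (n : ℝ) * Real.log A / (2 * α * (α - 1))
        + (n : ℝ) * s * Γ ^ 2 / (2 * σ ^ 2 * A) := by
    rw [hMlogdef]
    field_simp
  rw [← hfinal]
  rcases eq_or_lt_of_le hS0 with hS | hS
  · -- degenerate case S = 0
    rw [← hS, Real.log_zero, mul_zero]
    -- need RHS ≥ 0, via Bernoulli
    have hber : A ≤ s ^ α := by
      have := one_add_mul_self_le_rpow_one_add (by linarith : (-1:ℝ) ≤ s - 1) hα.le
      simpa [hAdef] using this
    have hlogA : Real.log A ≤ α * Real.log s := by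
      calc Real.log A ≤ Real.log (s ^ α) := Real.log_le_log hA hber
        _ = α * Real.log s := Real.log_rpow hs α
    have h3 : 0 ≤ α * s * (α - 1) * ((n:ℝ) * Γ ^ 2) / (2 * σ ^ 2 * A) := by positivity
    have hn0 : (0:ℝ) ≤ (n:ℝ) := Nat.cast_nonneg n
    have hMl : 0 ≤ Mlog := by
      rw [hMlogdef]
      nlinarith
    exact mul_nonneg (by positivity) hMl
  · -- main case S > 0
    have hlog : Real.log S ≤ Mlog := by
      calc Real.log S ≤ Real.log (Real.exp Mlog) := Real.log_le_log hS hSM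
        _ = Mlog := Real.log_exp Mlog
    exact mul_le_mul_of_nonneg_left hlog (by positivity)
end

section
/- Let n ≥ 1, p ∈ (0,1), and α > 1. On a finite probability space under a measure P, let X = (X_1,…,X_n), a = (a_1,…,a_n) and N = (N_1,…,N_n) be {0,1}-valued random vectors such that N_1,…,N_n are i.i.d. Bernoulli(p) and N is independent of the pair (X,a). Set Y_t = (a_t X_t) ⊕ N_t (addition modulo 2). Let Q be the measure under which the triple (X, a, Ñ) has the same joint law as (X, a, N) under P and the output is Y_t = X_t ⊕ Ñ_t. Let P_n and Q_n denote the laws of the triple (X, Y, a) under P and Q respectively. Then D_α(Q_n‖P_n) ≤ (1/(α(α−1)))·ln E_P[ δ(α)^{∑_{t=1}^{n}(1−a_t)} ], where δ(α) = p·((1−p)/p)^{α} + (1−p)·(p/(1−p))^{α}. -/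
open MeasureTheory ProbabilityTheory
open scoped BigOperators

open Classical in
/-- Rényi divergence of order `α` between two measures on a finite type,
with the `1/(α(α-1))` normalization; `+∞` if the support condition fails. -/
noncomputable def renyiDivMeas {S : Type*} [Fintype S] [MeasurableSpace S]
    (α : ℝ) (μ ν : Measure S) : EReal :=
  if ∀ i : S, ν {i} = 0 → μ {i} = 0 then
    (((1 / (α * (α - 1))) * Real.log
      (∑ i : S, (μ {i}).toReal ^ α * (ν {i}).toReal ^ (1 - α)) : ℝ) : EReal)
  else ⊤

private lemma aux_rpow_self {u α : ℝ} (hu : 0 ≤ u) (hα : α ≠ 0) :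
    u ^ α * u ^ (1 - α) = u := by
  rcases eq_or_lt_of_le hu with h | h
  · rw [← h, Real.zero_rpow hα, zero_mul]
  · rw [← Real.rpow_add h]
    norm_num

private lemma aux_bool_xor (c nt yt : Bool) : xor c nt = yt ↔ nt = xor yt c := by
  cases c <;> cases nt <;> cases yt <;> decide

/-- Rényi divergence bound for the binary channel with erasures: the divergence of the
erasure-free reference law `Q_n` from the true law `P_n` of `(X, Y, a)` is bounded via
`δ(α)` raised to the number of erasures. -/
theorem renyiDiv_binary_erasure_bound
    {Ω : Type*} [Fintype Ω] [MeasurableSpace Ω] [DiscreteMeasurableSpace Ω]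
    (P : Measure Ω) [IsProbabilityMeasure P]
    (n : ℕ) (hn : 1 ≤ n) (p α : ℝ) (hp0 : 0 < p) (hp1 : p < 1) (hα : 1 < α)
    (X a N : Fin n → Ω → Bool)
    (hNdist : ∀ t, P {ω | N t ω = true} = ENNReal.ofReal p)
    (hNiid : iIndepFun N P)
    (hindep : IndepFun (fun ω => fun t => (X t ω, a t ω)) (fun ω => fun t => N t ω) P)
    (Y : Fin n → Ω → Bool)
    (hY : ∀ t ω, Y t ω = xor (a t ω && X t ω) (N t ω))
    (Pn Qn : Measure ((Fin n → Bool) × (Fin n → Bool) × (Fin n → Bool)))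
    (hPn : Pn = P.map (fun ω => ((fun t => X t ω), (fun t => Y t ω), (fun t => a t ω))))
    (hQn : Qn = P.map (fun ω =>
      ((fun t => X t ω), (fun t => xor (X t ω) (N t ω)), (fun t => a t ω)))) :
    renyiDivMeas α Qn Pn
      ≤ (((1 / (α * (α - 1))) * Real.log (∫ ω,
            (p * ((1 - p) / p) ^ α + (1 - p) * (p / (1 - p)) ^ α)
              ^ ((Finset.univ.filter (fun t : Fin n => a t ω = false)).card) ∂P) : ℝ)
          : EReal) := by
  classical
  set δ : ℝ := p * ((1 - p) / p) ^ α + (1 - p) * (p / (1 - p)) ^ α with hδdef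
  have hq0 : (0:ℝ) < 1 - p := by linarith
  have hα0 : (0:ℝ) < α := by linarith
  have hαα : (0:ℝ) < α * (α - 1) := by nlinarith
  -- real noise pmf
  set gr : Bool → ℝ := fun b => if b then p else 1 - p with hgr
  have hgrpos : ∀ b, 0 < gr b := by intro b; cases b <;> simpa [hgr] using by linarith
  -- ennreal noise pmf
  set g : Bool → ENNReal := fun b => ENNReal.ofReal (gr b) with hg
  have hg_ne_zero : ∀ b, g b ≠ 0 := by
    intro b; simp [hg, ENNReal.ofReal_eq_zero, not_le, hgrpos b]
  have hg_toReal : ∀ b, (g b).toReal = gr b := by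
    intro b; simp [hg, ENNReal.toReal_ofReal (hgrpos b).le]
  -- the vectors
  set V : Ω → (Fin n → Bool × Bool) := fun ω => fun t => (X t ω, a t ω) with hV
  set W : Ω → (Fin n → Bool) := fun ω => fun t => N t ω with hW
  -- noise marginal
  have hN1 : ∀ t (b : Bool), P (N t ⁻¹' {b}) = g b := by
    intro t b
    cases b
    · have hset : N t ⁻¹' {false} = {ω | N t ω = true}ᶜ := by
        ext ω; simp [Set.mem_preimage]
      rw [hset, measure_compl MeasurableSet.of_discrete (measure_ne_top _ _), hNdist,
        measure_univ]
      simp only [hg, hgr]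
      rw [← ENNReal.ofReal_one, ← ENNReal.ofReal_sub _ hp0.le]
      norm_num
    · rw [show N t ⁻¹' {true} = {ω | N t ω = true} by ext ω; simp]
      simpa [hg, hgr] using hNdist t
  have hWm : ∀ m : Fin n → Bool, P (W ⁻¹' {m}) = ∏ t, g (m t) := by
    intro m
    have hset : W ⁻¹' {m} = ⋂ t, ⋂ (_ : t ∈ Finset.univ), N t ⁻¹' {m t} := by
      ext ω; simp [hW, funext_iff]
    rw [hset, hNiid.measure_inter_preimage_eq_mul Finset.univ
      (sets := fun t => {m t}) (fun i _ => MeasurableSet.of_discrete)]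
    simp [hN1]
  set μf : (Fin n → Bool × Bool) → ENNReal := fun v => P (V ⁻¹' {v}) with hμf
  -- the key computation of the pushforward pmfs
  have key : ∀ (c : Bool → Bool → Bool) (x y av : Fin n → Bool),
      P ((fun ω => ((fun t => X t ω),
          (fun t => xor (c (X t ω) (a t ω)) (N t ω)), (fun t => a t ω))) ⁻¹' {(x, y, av)})
        = μf (fun t => (x t, av t)) * ∏ t, g (xor (y t) (c (x t) (av t))) := by
    intro c x y av
    have hset : ((fun ω => ((fun t => X t ω),
          (fun t => xor (c (X t ω) (a t ω)) (N t ω)), (fun t => a t ω))) ⁻¹' {(x, y, av)})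
        = V ⁻¹' {fun t => (x t, av t)} ∩ W ⁻¹' {fun t => xor (y t) (c (x t) (av t))} := by
      ext ω
      simp only [Set.mem_preimage, Set.mem_singleton_iff, Set.mem_inter_iff, Prod.mk.injEq,
        funext_iff, hV, hW, Prod.ext_iff]
      constructor
      · rintro ⟨h1, h2, h3⟩
        refine ⟨fun t => ⟨h1 t, h3 t⟩, fun t => ?_⟩
        have h2t := h2 t
        rw [h1 t, h3 t] at h2t
        exact (aux_bool_xor _ _ _).mp h2t
      · rintro ⟨h1, h2⟩
        refine ⟨fun t => (h1 t).1, fun t => ?_, fun t => (h1 t).2⟩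
        rw [(h1 t).1, (h1 t).2]
        exact (aux_bool_xor _ _ _).mpr (h2 t)
    rw [hset, hindep.measure_inter_preimage_eq_mul _ _ (measurableSet_singleton _)
      (measurableSet_singleton _), hWm]
  have hPn' : ∀ x y av : Fin n → Bool,
      Pn {(x, y, av)} = μf (fun t => (x t, av t)) * ∏ t, g (xor (y t) (av t && x t)) := by
    intro x y av
    rw [hPn, Measure.map_apply Measurable.of_discrete (measurableSet_singleton _)]
    have hfun : (fun ω => ((fun t => X t ω), (fun t => Y t ω), (fun t => a t ω)))
        = (fun ω => ((fun t => X t ω),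
            (fun t => xor ((fun xb ab => ab && xb) (X t ω) (a t ω)) (N t ω)),
            (fun t => a t ω))) := by
      funext ω; simp [hY]
    rw [hfun]
    exact key (fun xb ab => ab && xb) x y av
  have hQn' : ∀ x y av : Fin n → Bool,
      Qn {(x, y, av)} = μf (fun t => (x t, av t)) * ∏ t, g (xor (y t) (x t)) := by
    intro x y av
    rw [hQn, Measure.map_apply Measurable.of_discrete (measurableSet_singleton _)]
    exact key (fun xb _ => xb) x y av
  -- support condition
  have hsupp : ∀ i : (Fin n → Bool) × (Fin n → Bool) × (Fin n → Bool),
      Pn {i} = 0 → Qn {i} = 0 := by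
    rintro ⟨x, y, av⟩ h
    rw [hPn' x y av] at h
    rw [hQn' x y av]
    rcases mul_eq_zero.1 h with h | h
    · rw [h, zero_mul]
    · exact absurd h (Finset.prod_ne_zero_iff.2 fun t _ => hg_ne_zero _)
  -- δ ≥ 1
  have hδ1 : (1:ℝ) ≤ δ := by
    have h := Real.rpow_arith_mean_le_arith_mean_rpow Finset.univ
      (fun b : Bool => if b then p else 1 - p)
      (fun b : Bool => if b then (1 - p) / p else p / (1 - p))
      (fun b _ => by cases b <;> simp <;> linarith)
      (by rw [Fintype.sum_bool]; simp)
      (fun b _ => by cases b <;> simp <;> positivity)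
      hα.le
    rw [Fintype.sum_bool] at h
    norm_num at h
    have hsum : p * ((1 - p) / p) + (1 - p) * (p / (1 - p)) = 1 := by
      field_simp
      ring
    rw [hsum, Real.one_rpow] at h
    simpa [hδdef, Fintype.sum_bool] using h
  -- δ in rpow form
  have hδeq : δ = (1 - p) ^ α * p ^ (1 - α) + p ^ α * (1 - p) ^ (1 - α) := by
    rw [hδdef, Real.div_rpow hq0.le hp0.le, Real.div_rpow hp0.le hq0.le,
      Real.rpow_sub hp0, Real.rpow_sub hq0, Real.rpow_one]
    have h1 : p ^ α ≠ 0 := by positivity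
    have h2 : (1 - p) ^ α ≠ 0 := by positivity
    field_simp
    rw [Real.rpow_one]
    ring
  -- per-coordinate sum evaluation
  have hcoord : ∀ (xb ab : Bool),
      gr (xor false xb) ^ α * gr (xor false (ab && xb)) ^ (1 - α)
        + gr (xor true xb) ^ α * gr (xor true (ab && xb)) ^ (1 - α)
      = if ab = false ∧ xb = true then δ else 1 := by
    have h1 : ∀ b : Bool, gr b ^ α * gr b ^ (1 - α) = gr b :=
      fun b => aux_rpow_self (hgrpos b).le (ne_of_gt hα0)
    have hgt : gr true = p := by simp [hgr]
    have hgf : gr false = 1 - p := by simp [hgr]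
    intro xb ab
    cases xb <;> cases ab
    · show gr false ^ α * gr false ^ (1 - α) + gr true ^ α * gr true ^ (1 - α) = _
      rw [h1, h1, hgt, hgf]; norm_num
    · show gr false ^ α * gr false ^ (1 - α) + gr true ^ α * gr true ^ (1 - α) = _
      rw [h1, h1, hgt, hgf]; norm_num
    · show gr true ^ α * gr false ^ (1 - α) + gr false ^ α * gr true ^ (1 - α) = _
      rw [hgt, hgf, hδeq]
      norm_num
      ring
    · show gr true ^ α * gr true ^ (1 - α) + gr false ^ α * gr false ^ (1 - α) = _
      rw [h1, h1, hgt, hgf]; norm_num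
  -- summing over y for fixed (x, av)
  have hterm : ∀ x av : Fin n → Bool,
      (∑ y : Fin n → Bool, (Qn {(x, y, av)}).toReal ^ α * (Pn {(x, y, av)}).toReal ^ (1 - α))
        = (μf (fun t => (x t, av t))).toReal *
            δ ^ (Finset.univ.filter (fun t => av t = false ∧ x t = true)).card := by
    intro x av
    have hy : ∀ y : Fin n → Bool,
        (Qn {(x, y, av)}).toReal ^ α * (Pn {(x, y, av)}).toReal ^ (1 - α)
          = (μf (fun t => (x t, av t))).toReal *
              ∏ t, (gr (xor (y t) (x t)) ^ α * gr (xor (y t) (av t && x t)) ^ (1 - α)) := by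
      intro y
      rw [hQn' x y av, hPn' x y av, ENNReal.toReal_mul, ENNReal.toReal_mul,
        ENNReal.toReal_prod, ENNReal.toReal_prod]
      simp only [hg_toReal]
      rw [Real.mul_rpow ENNReal.toReal_nonneg (Finset.prod_nonneg fun t _ => (hgrpos _).le),
        Real.mul_rpow ENNReal.toReal_nonneg (Finset.prod_nonneg fun t _ => (hgrpos _).le),
        ← Real.finset_prod_rpow _ _ (fun t _ => (hgrpos _).le),
        ← Real.finset_prod_rpow _ _ (fun t _ => (hgrpos _).le)]
      rw [mul_mul_mul_comm, aux_rpow_self ENNReal.toReal_nonneg (ne_of_gt hα0),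
        ← Finset.prod_mul_distrib]
    calc (∑ y : Fin n → Bool, (Qn {(x, y, av)}).toReal ^ α * (Pn {(x, y, av)}).toReal ^ (1 - α))
        = ∑ y : Fin n → Bool, (μf (fun t => (x t, av t))).toReal *
            ∏ t, (fun (t : Fin n) (b : Bool) =>
              gr (xor b (x t)) ^ α * gr (xor b (av t && x t)) ^ (1 - α)) t (y t) :=
          Finset.sum_congr rfl fun y _ => hy y
      _ = (μf (fun t => (x t, av t))).toReal *
            ∑ y : Fin n → Bool, ∏ t, (fun (t : Fin n) (b : Bool) =>
              gr (xor b (x t)) ^ α * gr (xor b (av t && x t)) ^ (1 - α)) t (y t) := by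
          rw [← Finset.mul_sum]
      _ = (μf (fun t => (x t, av t))).toReal *
            ∏ t : Fin n, ∑ b : Bool,
              gr (xor b (x t)) ^ α * gr (xor b (av t && x t)) ^ (1 - α) := by
          rw [Fintype.prod_sum]
      _ = (μf (fun t => (x t, av t))).toReal *
            ∏ t : Fin n, (if av t = false ∧ x t = true then δ else 1) := by
          congr 1
          refine Finset.prod_congr rfl fun t _ => ?_
          rw [Fintype.sum_bool, add_comm]
          exact hcoord (x t) (av t)
      _ = (μf (fun t => (x t, av t))).toReal *
            δ ^ (Finset.univ.filter (fun t => av t = false ∧ x t = true)).card := by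
          rw [← Finset.prod_filter, Finset.prod_const]
  -- the integral as a sum over values of V
  have hEeq : (∫ ω, δ ^ ((Finset.univ.filter (fun t : Fin n => a t ω = false)).card) ∂P)
      = ∑ x : Fin n → Bool, ∑ av : Fin n → Bool,
          (μf (fun t => (x t, av t))).toReal *
            δ ^ (Finset.univ.filter (fun t => av t = false)).card := by
    have h1 : (∫ ω, δ ^ ((Finset.univ.filter (fun t : Fin n => a t ω = false)).card) ∂P)
        = ∫ v, (fun v : Fin n → Bool × Bool =>
            δ ^ (Finset.univ.filter (fun t => (v t).2 = false)).card) v ∂(P.map V) := by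
      rw [integral_map (Measurable.of_discrete (f := V)).aemeasurable
        (measurable_of_countable _).aestronglyMeasurable]
    have h2 : ∀ v : Fin n → Bool × Bool, (P.map V) {v} = μf v := fun v => by
      rw [Measure.map_apply Measurable.of_discrete (measurableSet_singleton _)]
    rw [h1, integral_fintype (Integrable.of_finite)]
    calc ∑ v : Fin n → Bool × Bool, ((P.map V) {v}).toReal •
            δ ^ (Finset.univ.filter (fun t => (v t).2 = false)).card
        = ∑ q : (Fin n → Bool) × (Fin n → Bool),
            (μf (fun t => (q.1 t, q.2 t))).toReal *
              δ ^ (Finset.univ.filter (fun t => q.2 t = false)).card := by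
          refine Fintype.sum_equiv (Equiv.arrowProdEquivProdArrow (Fin n) (fun _ => Bool) (fun _ => Bool)) _ _
            (fun v => ?_)
          simp [h2, smul_eq_mul, Equiv.arrowProdEquivProdArrow]
          exact Or.inl (by congr)
      _ = ∑ x : Fin n → Bool, ∑ av : Fin n → Bool,
            (μf (fun t => (x t, av t))).toReal *
              δ ^ (Finset.univ.filter (fun t => av t = false)).card := by
          rw [Fintype.sum_prod_type]
  -- the main sum bound
  have hSle : (∑ i : (Fin n → Bool) × (Fin n → Bool) × (Fin n → Bool),
        (Qn {i}).toReal ^ α * (Pn {i}).toReal ^ (1 - α))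
      ≤ ∫ ω, δ ^ ((Finset.univ.filter (fun t : Fin n => a t ω = false)).card) ∂P := by
    rw [hEeq]
    calc (∑ i : (Fin n → Bool) × (Fin n → Bool) × (Fin n → Bool),
          (Qn {i}).toReal ^ α * (Pn {i}).toReal ^ (1 - α))
        = ∑ x : Fin n → Bool, ∑ y : Fin n → Bool, ∑ av : Fin n → Bool,
            (Qn {(x, y, av)}).toReal ^ α * (Pn {(x, y, av)}).toReal ^ (1 - α) := by
          simp only [Fintype.sum_prod_type]
      _ = ∑ x : Fin n → Bool, ∑ av : Fin n → Bool, ∑ y : Fin n → Bool,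
            (Qn {(x, y, av)}).toReal ^ α * (Pn {(x, y, av)}).toReal ^ (1 - α) :=
          Finset.sum_congr rfl fun x _ => Finset.sum_comm
      _ = ∑ x : Fin n → Bool, ∑ av : Fin n → Bool,
            (μf (fun t => (x t, av t))).toReal *
              δ ^ (Finset.univ.filter (fun t => av t = false ∧ x t = true)).card :=
          Finset.sum_congr rfl fun x _ => Finset.sum_congr rfl fun av _ => hterm x av
      _ ≤ ∑ x : Fin n → Bool, ∑ av : Fin n → Bool,
            (μf (fun t => (x t, av t))).toReal *
              δ ^ (Finset.univ.filter (fun t => av t = false)).card := by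
          refine Finset.sum_le_sum fun x _ => Finset.sum_le_sum fun av _ => ?_
          refine mul_le_mul_of_nonneg_left ?_ ENNReal.toReal_nonneg
          exact pow_le_pow_right₀ hδ1 (Finset.card_le_card
            (fun t ht => by simp only [Finset.mem_filter] at ht ⊢; exact ⟨ht.1, ht.2.1⟩))
  -- put everything together
  rw [renyiDivMeas, if_pos hsupp, EReal.coe_le_coe_iff]
  refine mul_le_mul_of_nonneg_left ?_ (div_nonneg zero_le_one hαα.le)
  have hSnonneg : (0:ℝ) ≤ ∑ i : (Fin n → Bool) × (Fin n → Bool) × (Fin n → Bool),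
      (Qn {i}).toReal ^ α * (Pn {i}).toReal ^ (1 - α) :=
    Finset.sum_nonneg fun i _ => mul_nonneg (Real.rpow_nonneg ENNReal.toReal_nonneg _)
      (Real.rpow_nonneg ENNReal.toReal_nonneg _)
  have hE1 : (1:ℝ) ≤ ∫ ω, δ ^ ((Finset.univ.filter (fun t : Fin n => a t ω = false)).card) ∂P := by
    have hmono := integral_mono (μ := P) (integrable_const (1:ℝ)) Integrable.of_finite
      (fun ω => one_le_pow₀ (n := (Finset.univ.filter (fun t : Fin n => a t ω = false)).card) hδ1)
    simpa using hmono
  rcases eq_or_lt_of_le hSnonneg with h0 | h0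
  · rw [← h0, Real.log_zero]
    exact Real.log_nonneg hE1
  · exact Real.log_le_log h0 hSle
end

section
/- Let n ≥ 1, k ≥ 1, σ > 0, S > 0, and let h = (h_1,…,h_k) ∈ ℝᵏ and r₁, r₂ ∈ ℝ. Let C ⊂ ℝⁿ be a nonempty finite codebook and Π the uniform distribution on C. For x ∈ ℝⁿ define g_t(x) = ∑_{i=1}^{k} h_i x_{t−i} (with x_j = 0 for j ≤ 0), and assume every x ∈ C satisfies ∑_{t=1}^{n} x_t² = nS, ∑_{t=1}^{n} x_t g_t(x) = nSr₁, and ∑_{t=1}^{n} g_t(x)² = nSr₂. Let θ > 0 and φ > 0 and let α > 1 satisfy α/(2σ²) + (1−α)θ > 0. Define the conditional densities on ℝⁿ: p(y|x) = (2πσ²)^{−n/2}·exp(−(1/(2σ²))∑_{t=1}^{n}(y_t − x_t − g_t(x))²) and q(y|x) = (θ/π)^{n/2}·exp(−θ·∑_{t=1}^{n}(y_t − φx_t)²). Then (1/n)·D_α(P_n‖Q_n) := (1/(n·α(α−1)))·ln( ∑_{x∈C} Π(x)·∫_{ℝⁿ} p(y|x)^{α} q(y|x)^{1−α} dy ) =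 −ln(2θσ²)/(2α) − ln(α + 2(1−α)θσ²)/(2α(α−1)) + θS·[(1−φ)² + 2(1−φ)r₁ + r₂] / (α + 2(1−α)θσ²). -/
open MeasureTheory
open scoped BigOperators

/-- Extension of a vector in `ℝⁿ` to integer indices, vanishing outside `{0,…,n-1}`. -/
noncomputable def extVec (n : ℕ) (x : Fin n → ℝ) (j : ℤ) : ℝ :=
  if h : 0 ≤ j ∧ j < (n : ℤ) then x ⟨j.toNat, by omega⟩ else 0

/-- The intersymbol interference signal `g_t(x) = ∑_{i=1}^k h_i x_{t-i}`
(with `x_j = 0` for out-of-range indices), in 0-based coordinates. -/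
noncomputable def isiInterf (n k : ℕ) (h : Fin k → ℝ) (x : Fin n → ℝ) (t : Fin n) : ℝ :=
  ∑ i : Fin k, h i * extVec n x ((t : ℤ) - ((i : ℤ) + 1))

lemma gauss_shift (A μ : ℝ) :
    ∫ y : ℝ, Real.exp (-(A * (y - μ) ^ 2)) = Real.sqrt (Real.pi / A) := by
  rw [← integral_gaussian A]
  rw [show (fun y : ℝ => Real.exp (-A * y ^ 2)) = (fun y : ℝ => Real.exp (-(A * y ^ 2))) from
    funext fun y => by ring_nf]
  exact integral_sub_right_eq_self (fun y => Real.exp (-(A * y ^ 2))) μ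

/-- Exact computation of the normalized Rényi divergence between the Gaussian ISI channel
`P_n` and the memoryless Gaussian reference channel `Q_n` with gain `φ` and noise
variance `1/(2θ)`, for constant-composition-type codebooks. -/
theorem renyiDiv_isi_channel_eq
    (n k : ℕ) (hn : 1 ≤ n) (hk : 1 ≤ k) (σ S : ℝ) (hσ : 0 < σ) (hS : 0 < S)
    (h : Fin k → ℝ) (r₁ r₂ : ℝ)
    (C : Finset (Fin n → ℝ)) (hC : C.Nonempty)
    (hpow : ∀ x ∈ C, ∑ t, (x t) ^ 2 = (n : ℝ) * S)
    (hcorr : ∀ x ∈ C, ∑ t, x t * isiInterf n k h x t = (n : ℝ) * S * r₁)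
    (hinterf : ∀ x ∈ C, ∑ t, (isiInterf n k h x t) ^ 2 = (n : ℝ) * S * r₂)
    (θ φ α : ℝ) (hθ : 0 < θ) (hφ : 0 < φ) (hα : 1 < α)
    (hpos : 0 < α / (2 * σ ^ 2) + (1 - α) * θ)
    (p q : (Fin n → ℝ) → (Fin n → ℝ) → ℝ)
    (hp : ∀ y x, p y x = (2 * Real.pi * σ ^ 2) ^ (-(n : ℝ) / 2)
      * Real.exp (-(1 / (2 * σ ^ 2)) * ∑ t, (y t - x t - isiInterf n k h x t) ^ 2))
    (hq : ∀ y x, q y x = (θ / Real.pi) ^ ((n : ℝ) / 2)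
      * Real.exp (-θ * ∑ t, (y t - φ * x t) ^ 2)) :
    (1 / ((n : ℝ) * α * (α - 1))) * Real.log
        (∑ x ∈ C, (1 / (C.card : ℝ)) * ∫ y : Fin n → ℝ, (p y x) ^ α * (q y x) ^ (1 - α))
      = -Real.log (2 * θ * σ ^ 2) / (2 * α)
        - Real.log (α + 2 * (1 - α) * θ * σ ^ 2) / (2 * α * (α - 1))
        + θ * S * ((1 - φ) ^ 2 + 2 * (1 - φ) * r₁ + r₂)
            / (α + 2 * (1 - α) * θ * σ ^ 2) := by
  have hπ : (0:ℝ) < Real.pi := Real.pi_pos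
  have hσ2 : (0:ℝ) < σ ^ 2 := by positivity
  set P : ℝ := α * (1 / (2 * σ ^ 2)) with hPdef
  set Q : ℝ := (1 - α) * θ with hQdef
  have hAeq : P + Q = α / (2 * σ ^ 2) + (1 - α) * θ := by rw [hPdef, hQdef]; ring
  have hApos : 0 < P + Q := hAeq ▸ hpos
  have hA0 : P + Q ≠ 0 := hApos.ne'
  set K : ℝ := (1 - φ) ^ 2 + 2 * (1 - φ) * r₁ + r₂ with hKdef
  have hb1 : (0:ℝ) < 2 * Real.pi * σ ^ 2 := by positivity
  have hb2 : (0:ℝ) < θ / Real.pi := by positivity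
  -- value of the integral, independent of x
  set V : ℝ := (2 * Real.pi * σ ^ 2) ^ ((-(n : ℝ) / 2) * α)
      * (θ / Real.pi) ^ (((n : ℝ) / 2) * (1 - α))
      * Real.exp (-(P * Q / (P + Q) * ((n : ℝ) * S * K)))
      * Real.sqrt (Real.pi / (P + Q)) ^ n with hVdef
  have key : ∀ u v y : ℝ, P*(y-u)^2 + Q*(y-v)^2
      = (P+Q)*(y-(P*u+Q*v)/(P+Q))^2 + P*Q/(P+Q)*(u-v)^2 := by
    intro u v y; field_simp; ring
  have hint : ∀ x ∈ C, (∫ y : Fin n → ℝ, (p y x) ^ α * (q y x) ^ (1 - α)) = V := by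
    intro x hx
    set g : Fin n → ℝ := isiInterf n k h x with hgdef
    set μ : Fin n → ℝ := fun t => (P * (x t + g t) + Q * (φ * x t)) / (P + Q) with hμdef
    have hsum : ∑ t, ((x t + g t) - φ * x t) ^ 2 = (n : ℝ) * S * K := by
      have e1 : ∀ t : Fin n, ((x t + g t) - φ * x t) ^ 2
          = (1-φ)^2 * (x t)^2 + 2*(1-φ) * (x t * g t) + (g t)^2 := fun t => by ring
      rw [Finset.sum_congr rfl fun t _ => e1 t]
      rw [Finset.sum_add_distrib, Finset.sum_add_distrib, ← Finset.mul_sum, ← Finset.mul_sum]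
      rw [hpow x hx, hcorr x hx, hinterf x hx, hKdef]
      ring
    have hpt : ∀ y : Fin n → ℝ, (p y x) ^ α * (q y x) ^ (1 - α)
        = ((2 * Real.pi * σ ^ 2) ^ ((-(n : ℝ) / 2) * α)
            * (θ / Real.pi) ^ (((n : ℝ) / 2) * (1 - α))
            * Real.exp (-(P * Q / (P + Q) * ((n : ℝ) * S * K))))
          * ∏ t, Real.exp (-((P+Q) * (y t - μ t) ^ 2)) := by
      intro y
      rw [hp, hq]
      rw [Real.mul_rpow (Real.rpow_nonneg hb1.le _) (Real.exp_pos _).le,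
          Real.mul_rpow (Real.rpow_nonneg hb2.le _) (Real.exp_pos _).le,
          ← Real.rpow_mul hb1.le, ← Real.rpow_mul hb2.le,
          ← Real.exp_sum, Real.rpow_def_of_pos (Real.exp_pos _),
          Real.rpow_def_of_pos (Real.exp_pos _), Real.log_exp, Real.log_exp,
          ]
      set s1 := ∑ t, (y t - x t - isiInterf n k h x t) ^ 2 with hs1
      set s2 := ∑ t, (y t - φ * x t) ^ 2 with hs2
      have h1 : ∀ t : Fin n, P * (y t - (x t + g t))^2 + Q * (y t - φ * x t)^2
          = (P+Q) * (y t - μ t)^2 + P*Q/(P+Q) * ((x t + g t) - φ * x t)^2 := fun t => key _ _ _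
      have h2 : ∑ t, (P * (y t - (x t + g t))^2 + Q * (y t - φ * x t)^2)
          = (P+Q) * (∑ t, (y t - μ t)^2) + P*Q/(P+Q) * ((n:ℝ)*S*K) := by
        rw [Finset.sum_congr rfl fun t _ => h1 t, Finset.sum_add_distrib, ← Finset.mul_sum,
          ← Finset.mul_sum, hsum]
      have h3 : ∑ t, (P * (y t - (x t + g t))^2 + Q * (y t - φ * x t)^2)
          = P * s1 + Q * s2 := by
        rw [Finset.sum_add_distrib, ← Finset.mul_sum, ← Finset.mul_sum, hs1, hs2]
        congr 2
        exact Finset.sum_congr rfl fun t _ => by rw [hgdef]; ring_nf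
      rw [h3] at h2
      have hexp : (-(1 / (2 * σ ^ 2)) * s1) * α + (-θ * s2) * (1 - α)
          = -(P * Q / (P + Q) * ((n:ℝ) * S * K)) + ∑ t, -((P + Q) * (y t - μ t) ^ 2) := by
        rw [Finset.sum_neg_distrib, ← Finset.mul_sum]
        linear_combination (-1 : ℝ) * h2 + s1 * hPdef + s2 * hQdef
      rw [mul_mul_mul_comm, ← Real.exp_add, hexp, Real.exp_add]
      ring
    rw [MeasureTheory.integral_congr_ae (Filter.Eventually.of_forall hpt)]
    rw [MeasureTheory.integral_const_mul]
    rw [MeasureTheory.volume_pi, MeasureTheory.integral_fintype_prod_eq_prod (ι := Fin n)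
      (fun t (z : ℝ) => Real.exp (-((P+Q) * (z - μ t) ^ 2)))]
    simp_rw [gauss_shift (P+Q)]
    rw [Finset.prod_const, Finset.card_univ, Fintype.card_fin, hVdef]
  rw [Finset.sum_congr rfl (fun x hx => by rw [hint x hx])]
  have hcard : (0:ℝ) < C.card := by exact_mod_cast Finset.card_pos.mpr hC
  rw [Finset.sum_const, nsmul_eq_mul,
    show (C.card:ℝ) * (1/(C.card:ℝ) * V) = V from by field_simp]
  have hπA : (0:ℝ) < Real.pi / (P+Q) := by positivity
  have hlogV : Real.log V = (-(n:ℝ)/2*α) * Real.log (2*Real.pi*σ^2)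
      + ((n:ℝ)/2*(1-α)) * Real.log (θ/Real.pi)
      + (-(P*Q/(P+Q)*((n:ℝ)*S*K)))
      + (n:ℝ) * (Real.log (Real.pi/(P+Q)) / 2) := by
    rw [hVdef, Real.log_mul (by positivity) (by positivity),
      Real.log_mul (by positivity) (Real.exp_pos _).ne',
      Real.log_mul (by positivity) (by positivity),
      Real.log_rpow hb1, Real.log_rpow hb2, Real.log_exp, Real.log_pow,
      Real.log_sqrt hπA.le]
  have l1 : Real.log (2*Real.pi*σ^2) = Real.log 2 + Real.log Real.pi + Real.log (σ^2) := by
    rw [Real.log_mul (by positivity) hσ2.ne', Real.log_mul two_ne_zero hπ.ne']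
  have l2 : Real.log (θ/Real.pi) = Real.log θ - Real.log Real.pi := Real.log_div hθ.ne' hπ.ne'
  have l3 : Real.log (Real.pi/(P+Q)) = Real.log Real.pi - Real.log (P+Q) :=
    Real.log_div hπ.ne' hA0
  have l4 : Real.log (2*θ*σ^2) = Real.log 2 + Real.log θ + Real.log (σ^2) := by
    rw [Real.log_mul (by positivity) hσ2.ne', Real.log_mul two_ne_zero hθ.ne']
  have hDeq : α + 2*(1-α)*θ*σ^2 = 2*σ^2*(P+Q) := by
    rw [hPdef, hQdef]; field_simp
  have l5 : Real.log (α + 2*(1-α)*θ*σ^2)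
      = Real.log 2 + Real.log (σ^2) + Real.log (P+Q) := by
    rw [hDeq, Real.log_mul (by positivity) hA0, Real.log_mul two_ne_zero hσ2.ne']
  rw [hlogV, l1, l2, l3, l4, l5, hDeq, hKdef, hPdef, hQdef]
  have hn0 : (n:ℝ) ≠ 0 := by positivity
  have hα0 : α ≠ 0 := by linarith
  have hα1 : α - 1 ≠ 0 := by linarith
  field_simp
  ring
end
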